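/- arXiv:1906.12144 — 4 statements merged into one kernel-verified Lean document; each statement's English description precedes it below -/
import Mathlib

section
/- Every chordal graph has a simplicial vertex, i.e., a vertex v such that the closed neighborhood N[v] induces a clique. -/
open Finset

variable {V : Type} [Fintype V] [DecidableEq V]

/-- The closed neighborhood `N[v]` of a vertex, as a `Finset`. -/
def closedNbhd (G : SimpleGraph V) [DecidableRel G.Adj] (v : V) : Finset V :=
  insert v (G.neighborFinset v)

/-- The graph `G \ A` obtained by deleting the vertices in `A` (keeping them as
isolated vertices on the same vertex set). -/
def deleteVerts (G : SimpleGraph V) (A : Finset V) : SimpleGraph V where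
  Adj u v := G.Adj u v ∧ u ∉ A ∧ v ∉ A
  symm := ⟨fun u v h => ⟨h.1.symm, h.2.2, h.2.1⟩⟩
  loopless := ⟨fun u h => G.loopless.irrefl u h.1⟩

/-- `C` is a vertex cover of `G`. -/
def IsVertexCover (G : SimpleGraph V) (C : Finset V) : Prop :=
  ∀ ⦃u v : V⦄, G.Adj u v → u ∈ C ∨ v ∈ C

/-- `C` is a minimal vertex cover of `G`. -/
def IsMinVertexCover (G : SimpleGraph V) (C : Finset V) : Prop :=
  IsVertexCover G C ∧ ∀ D : Finset V, D ⊂ C → ¬ IsVertexCover G D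

/-- A graph is chordal if it has no induced cycle of length greater than `3`. -/
def IsChordal (G : SimpleGraph V) : Prop :=
  ∀ n : ℕ, 4 ≤ n → ∀ f : ZMod n → V, Function.Injective f →
    ¬ (∀ i j : ZMod n, G.Adj (f i) (f j) ↔ j = i + 1 ∨ i = j + 1)

/-- `S` is an independent set of `G`. -/
def IsIndepSet (G : SimpleGraph V) (S : Finset V) : Prop :=
  ∀ ⦃u : V⦄, u ∈ S → ∀ ⦃v : V⦄, v ∈ S → ¬ G.Adj u v

/-- `S` is a maximal independent set of `G`. -/
def IsMaxIndepSet (G : SimpleGraph V) (S : Finset V) : Prop :=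
  IsIndepSet G S ∧ ∀ T : Finset V, IsIndepSet G T → S ⊆ T → S = T

/-- `F` is a maximal clique of `G`, i.e. a facet of the clique complex `Δ(G)`. -/
def IsMaxCliqueF (G : SimpleGraph V) (F : Finset V) : Prop :=
  G.IsClique ↑F ∧ ∀ F' : Finset V, G.IsClique ↑F' → F ⊆ F' → F = F'

/-- `M` is an induced matching of `G`: a set of edges of `G` such that no edge of `G`
joins a vertex of one member to a vertex of a different member. -/
def IsInducedMatching (G : SimpleGraph V) (M : Finset (Sym2 V)) : Prop :=
  (∀ e ∈ M, e ∈ G.edgeSet) ∧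
    ∀ e ∈ M, ∀ f ∈ M, e ≠ f → ∀ u v : V, u ∈ e → v ∈ f → ¬ G.Adj u v

/-- The induced matching number `im(G)`. -/
noncomputable def inducedMatchingNumber (G : SimpleGraph V) : ℕ :=
  sSup {n | ∃ M : Finset (Sym2 V), IsInducedMatching G M ∧ M.card = n}

/-- The graph `G` has no edges. -/
def NoEdges (G : SimpleGraph V) : Prop := ∀ u v : V, ¬ G.Adj u v

open MvPolynomial in
/-- The squarefree monomial `∏_{v ∈ C} x_v` associated to a set of vertices. -/
noncomputable def coverMonomial (K : Type) [Field K] (C : Finset V) : MvPolynomial V K :=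
  ∏ v ∈ C, X v

open MvPolynomial in
/-- The cover ideal `J(G)`, generated by the monomials of the minimal vertex covers. -/
noncomputable def coverIdeal (K : Type) [Field K] (G : SimpleGraph V) : Ideal (MvPolynomial V K) :=
  Ideal.span {m | ∃ C : Finset V, IsMinVertexCover G C ∧ m = coverMonomial K C}

open MvPolynomial in
/-- The edge ideal `I(G)`. -/
noncomputable def edgeIdeal (K : Type) [Field K] (G : SimpleGraph V) : Ideal (MvPolynomial V K) :=
  Ideal.span {m | ∃ u v : V, G.Adj u v ∧ m = X u * X v}

open MvPolynomial in
/-- `m` is a linear quotients ordering: each successive colon ideal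
`(m_1, …, m_{i-1}) : m_i` is generated by a subset of the variables. -/
def IsLinQuotOrd {K : Type} [Field K] {ι : Type} [LinearOrder ι]
    (m : ι → MvPolynomial V K) : Prop :=
  ∀ i : ι, ∃ T : Set V,
    (Ideal.span (m '' {j | j < i})).colon (Ideal.span {m i}) =
      Ideal.span ((fun v => (X v : MvPolynomial V K)) '' T)

set_option linter.unusedSectionVars false

variable {V : Type} [Fintype V] [DecidableEq V]

def GRel (G : SimpleGraph V) (t : Finset V) (u v : V) : Prop :=
  G.Adj u v ∧ u ∈ t ∧ v ∈ t

def GReach (G : SimpleGraph V) (t : Finset V) (x y : V) : Prop :=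
  x ∈ t ∧ Relation.ReflTransGen (GRel G t) x y

namespace GReach

variable {G : SimpleGraph V} {t t' : Finset V} {x y z w u v : V}

lemma rel_symm : Symmetric (GRel G t) := fun _ _ h => ⟨h.1.symm, h.2.2, h.2.1⟩

lemma refl (hx : x ∈ t) : GReach G t x x := ⟨hx, .refl⟩

lemma mem_left (h : GReach G t x y) : x ∈ t := h.1

lemma mem_right (h : GReach G t x y) : y ∈ t := by
  obtain ⟨hx, hr⟩ := h
  induction hr with
  | refl => exact hx
  | tail _ h ih => exact h.2.2

lemma trans (h : GReach G t x y) (h' : GReach G t y z) : GReach G t x z :=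
  ⟨h.1, h.2.trans h'.2⟩

lemma symm (h : GReach G t x y) : GReach G t y x :=
  ⟨h.mem_right, Relation.ReflTransGen.mono (fun _ _ hr => rel_symm hr) _ _ (Relation.ReflTransGen.swap _ _ h.2)⟩

lemma mono (hsub : t ⊆ t') (h : GReach G t x y) : GReach G t' x y :=
  ⟨hsub h.1, Relation.ReflTransGen.mono (fun _ _ hr => ⟨hr.1, hsub hr.2.1, hsub hr.2.2⟩) _ _ h.2⟩

lemma tail (h : GReach G t x u) (hadj : G.Adj u v) (hv : v ∈ t) : GReach G t x v :=
  ⟨h.1, h.2.tail ⟨hadj, h.mem_right, hv⟩⟩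

lemma head (hx : x ∈ t) (hadj : G.Adj x u) (h : GReach G t u y) : GReach G t x y :=
  ⟨hx, Relation.ReflTransGen.head ⟨hadj, hx, h.1⟩ h.2⟩

lemma avoid (h : GReach G (insert w t) x y) (hx : x ∈ t) :
    (y ∈ t ∧ GReach G t x y) ∨ ∃ u, GReach G t x u ∧ G.Adj u w := by
  obtain ⟨_, hr⟩ := h
  induction hr with
  | refl => exact Or.inl ⟨hx, GReach.refl hx⟩
  | @tail m c hr hstep ih =>
    rcases ih with ⟨hm, hreach⟩ | hfound
    · by_cases hc : c = w
      · exact Or.inr ⟨m, hreach, hc ▸ hstep.1⟩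
      · have hct : c ∈ t := by
          rcases Finset.mem_insert.1 hstep.2.2 with h | h
          · exact absurd h hc
          · exact h
        exact Or.inl ⟨hct, hreach.tail hstep.1 hct⟩
    · exact Or.inr hfound

lemma strengthen (h : GReach G t x y) (hall : ∀ z, GReach G t x z → z ∈ t') :
    GReach G t' x y := by
  obtain ⟨hx, hr⟩ := h
  induction hr with
  | refl => exact GReach.refl (hall x (GReach.refl hx))
  | @tail m c hr hstep ih =>
    exact (ih).tail hstep.1 (hall c ⟨hx, hr.tail hstep⟩)

lemma exists_chain (h : GReach G t x y) :
    ∃ p : List V, p.IsChain (GRel G t) ∧ p.head? = some x ∧ p.getLast? = some y := by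
  obtain ⟨hx, hr⟩ := h
  induction hr with
  | refl => exact ⟨[x], by simp, rfl, rfl⟩
  | @tail m c hr hstep ih =>
    obtain ⟨p, hc, hh, hl⟩ := ih
    refine ⟨p ++ [c], ?_, ?_, ?_⟩
    · rw [List.isChain_append]
      refine ⟨hc, by simp, ?_⟩
      intro a ha b hb
      simp at hb
      rw [hl] at ha; simp at ha
      subst ha hb
      exact hstep
    · cases p with
      | nil => simp at hh
      | cons q qs => simpa using hh
    · simp
end GReach

-- appended to p1
open Finset in
lemma exists_induced_path {G : SimpleGraph V} {t : Finset V} {x y : V}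
    (hr : GReach G t x y) (hxy : x ≠ y) :
    ∃ p : List V, 2 ≤ p.length ∧ p.Nodup ∧ p.head? = some x ∧ p.getLast? = some y ∧
      (∀ u ∈ p, u ∈ t) ∧
      (∀ i, (h : i + 1 < p.length) → G.Adj (p[i]'(by omega)) (p[i+1]'h)) ∧
      (∀ i j, (hi : i < p.length) → (hj : j < p.length) → i + 1 < j →
        ¬ G.Adj (p[i]'hi) (p[j]'hj)) := by
  classical
  set C : List V → Prop := fun p =>
    p.IsChain (GRel G t) ∧ p.head? = some x ∧ p.getLast? = some y with hC
  have hne : {n | ∃ p, C p ∧ p.length = n}.Nonempty := by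
    obtain ⟨p, h1, h2, h3⟩ := hr.exists_chain
    exact ⟨p.length, p, ⟨h1, h2, h3⟩, rfl⟩
  obtain ⟨n₀, ⟨p, hp, hlen⟩, hmin⟩ := Nat.lt_wfRel.wf.has_min _ hne
  have hmin' : ∀ q, C q → p.length ≤ q.length := by
    intro q hq
    have h' := hmin q.length ⟨q, hq, rfl⟩
    simp only [Nat.lt_wfRel, WellFoundedRelation.rel] at h'
    omega
  obtain ⟨hchain, hhead, hlast⟩ := hp
  have hpos : 0 < p.length := by
    cases p with
    | nil => simp at hhead
    | cons a l => simp
  have h0 : p[0]'hpos = x := by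
    rw [List.head?_eq_getElem?, List.getElem?_eq_getElem hpos] at hhead
    simpa using hhead
  have hL : p[p.length - 1]'(by omega) = y := by
    rw [List.getLast?_eq_getElem?, List.getElem?_eq_getElem (by omega)] at hlast
    simpa using hlast
  have h2 : 2 ≤ p.length := by
    by_contra hlt
    apply hxy
    rw [← h0, ← hL]
    congr 1
    omega
  -- all chain elements satisfy GRel memberships
  have hrel : ∀ i, (h : i + 1 < p.length) → GRel G t (p[i]'(by omega)) (p[i+1]'h) := by
    intro i h
    have := List.isChain_iff_getElem.1 hchain i (by omega)
    simpa using this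
  have hmem : ∀ u ∈ p, u ∈ t := by
    intro u hu
    obtain ⟨i, hi, rfl⟩ := List.mem_iff_getElem.1 hu
    rcases Nat.eq_zero_or_pos i with rfl | hipos
    · rw [h0]; exact hr.mem_left
    · have h' := (hrel (i-1) (by omega)).2.2
      have heq : p[i-1+1]'(by omega) = p[i]'hi := by congr 1; omega
      rwa [heq] at h'
  -- surgery: a shorter chain from x to y gives a contradiction
  have surgery : ∀ i j, (hi : i < p.length) → (hj : j < p.length) → i < j →
      GRel G t (p[i]'hi) (p[j]'hj) → j = i + 1 := by
    intro i j hi hj hij hadj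
    by_contra hne'
    have hij2 : i + 1 < j := by omega
    set q := p.take (i+1) ++ p.drop j with hq
    have hql : q.length = (i+1) + (p.length - j) := by
      simp [hq]; omega
    have htl : (p.take (i+1)).getLast? = some (p[i]'hi) := by
      rw [List.getLast?_eq_getElem?]
      have : (p.take (i+1)).length = i + 1 := by simp; omega
      rw [this]
      simp [List.getElem?_take, List.getElem?_eq_getElem hi]
    have hdh : (p.drop j).head? = some (p[j]'hj) := by
      rw [List.head?_drop, List.getElem?_eq_getElem hj]
    have hCq : C q := by
      refine ⟨?_, ?_, ?_⟩
      · rw [List.isChain_append]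
        refine ⟨hchain.take _, hchain.drop _, ?_⟩
        intro a ha b hb
        rw [htl] at ha; rw [hdh] at hb
        simp at ha hb; subst ha; subst hb; exact hadj
      · rw [List.head?_append]
        have : (p.take (i+1)).head? = some x := by
          rw [List.head?_eq_getElem?]
          simp [List.getElem?_take, List.getElem?_eq_getElem hpos, h0]
        simp [this]
      · rw [List.getLast?_append]
        have hdne : p.drop j ≠ [] := by
          simp [List.drop_eq_nil_iff]; omega
        have : (p.drop j).getLast? = some y := by
          rw [List.getLast?_eq_getElem?]
          have hdl : (p.drop j).length = p.length - j := by simp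
          rw [hdl]
          rw [List.getElem?_drop]
          have : j + (p.length - j - 1) = p.length - 1 := by omega
          rw [this, List.getElem?_eq_getElem (by omega), hL]
        simp [this, hdne]
    have := hmin' q hCq
    omega
  have hnodup : p.Nodup := by
    rw [List.nodup_iff_injective_get]
    rintro ⟨i, hi⟩ ⟨j, hj⟩ hij
    simp only [List.get_eq_getElem] at hij
    rw [Fin.mk_eq_mk]
    by_contra hne'
    -- wlog i < j
    rcases Nat.lt_or_ge i j with h | h
    case _ =>
      -- p[i] = p[j], i < j : shorter chain
      -- q := take (i+1) ++ drop (j+1), or take (i+1) if j+1 = length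
      rcases Nat.lt_or_ge (j+1) p.length with hj1 | hj1
      · have hg : GRel G t (p[i]'hi) (p[j+1]'hj1) := by
          rw [hij]; exact hrel j hj1
        have := surgery i (j+1) hi hj1 (by omega) hg
        omega
      · -- j = length - 1, so p[i] = y: q := take (i+1)
        have hiy : p[i]'hi = y := by rw [hij, ← hL]; congr 1; omega
        have hCq : C (p.take (i+1)) := by
          refine ⟨hchain.take _, ?_, ?_⟩
          · rw [List.head?_eq_getElem?]
            simp [List.getElem?_take, List.getElem?_eq_getElem hpos, h0]
          · rw [List.getLast?_eq_getElem?]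
            have : (p.take (i+1)).length = i + 1 := by simp; omega
            rw [this]
            simp [List.getElem?_take, List.getElem?_eq_getElem hi, hiy]
        have := hmin' _ hCq
        simp only [List.length_take] at this
        omega
    case _ =>
      have hji : j < i := by omega
      rcases Nat.lt_or_ge (i+1) p.length with hi1 | hi1
      · have hg : GRel G t (p[j]'hj) (p[i+1]'hi1) := by
          rw [← hij]; exact hrel i hi1
        have := surgery j (i+1) hj hi1 (by omega) hg
        omega
      · have hjy : p[j]'hj = y := by rw [← hij, ← hL]; congr 1; omega
        have hCq : C (p.take (j+1)) := by
          refine ⟨hchain.take _, ?_, ?_⟩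
          · rw [List.head?_eq_getElem?]
            simp [List.getElem?_take, List.getElem?_eq_getElem hpos, h0]
          · rw [List.getLast?_eq_getElem?]
            have : (p.take (j+1)).length = j + 1 := by simp; omega
            rw [this]
            simp [List.getElem?_take, List.getElem?_eq_getElem hj, hjy]
        have := hmin' _ hCq
        simp only [List.length_take] at this
        omega
  refine ⟨p, h2, hnodup, hhead, hlast, hmem, fun i h => (hrel i h).1, ?_⟩
  intro i j hi hj hij hadj
  have : GRel G t (p[i]'hi) (p[j]'hj) :=
    ⟨hadj, hmem _ (List.getElem_mem hi), hmem _ (List.getElem_mem hj)⟩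
  have := surgery i j hi hj (by omega) this
  omega

lemma head?_getElem {p : List V} {x : V} (h : p.head? = some x) (hpos : 0 < p.length) :
    p[0] = x := by
  rw [List.head?_eq_getElem?, List.getElem?_eq_getElem hpos] at h
  simpa using h

lemma getLast?_getElem {p : List V} {x : V} (h : p.getLast? = some x) (hpos : 0 < p.length) :
    p[p.length - 1]'(by omega) = x := by
  rw [List.getLast?_eq_getElem?, List.getElem?_eq_getElem (by omega : p.length - 1 < p.length)] at h
  simpa using h

lemma two_path_cycle {G : SimpleGraph V} (hG : IsChordal G)
    {tA tB : Finset V} {x y : V} {pA pB : List V}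
    (hxy : x ≠ y) (hnadj : ¬ G.Adj x y)
    (hxB : x ∉ tB) (hyB : y ∉ tB)
    (hdisjT : ∀ u ∈ tA, u ∉ tB)
    (hedge : ∀ u ∈ tA, ∀ v ∈ tB, ¬ G.Adj u v)
    (hA2 : 2 ≤ pA.length) (hAnd : pA.Nodup)
    (hAh : pA.head? = some x) (hAl : pA.getLast? = some y)
    (hAm : ∀ u ∈ pA, u ∈ insert x (insert y tA))
    (hAc : ∀ i, (h : i + 1 < pA.length) → G.Adj (pA[i]'(by omega)) (pA[i+1]'h))
    (hAf : ∀ i j, (hi : i < pA.length) → (hj : j < pA.length) → i + 1 < j →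
      ¬ G.Adj (pA[i]'hi) (pA[j]'hj))
    (hB2 : 2 ≤ pB.length) (hBnd : pB.Nodup)
    (hBh : pB.head? = some x) (hBl : pB.getLast? = some y)
    (hBm : ∀ u ∈ pB, u ∈ insert x (insert y tB))
    (hBc : ∀ i, (h : i + 1 < pB.length) → G.Adj (pB[i]'(by omega)) (pB[i+1]'h))
    (hBf : ∀ i j, (hi : i < pB.length) → (hj : j < pB.length) → i + 1 < j →
      ¬ G.Adj (pB[i]'hi) (pB[j]'hj)) :
    False := by
  have hA0 : pA[0]'(by omega) = x := head?_getElem hAh (by omega)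
  have hAL : pA[pA.length - 1]'(by omega) = y := getLast?_getElem hAl (by omega)
  have hB0 : pB[0]'(by omega) = x := head?_getElem hBh (by omega)
  have hBL : pB[pB.length - 1]'(by omega) = y := getLast?_getElem hBl (by omega)
  have h3A : 3 ≤ pA.length := by
    by_contra h
    have hl2 : pA.length = 2 := by omega
    apply hnadj
    have := hAc 0 (by omega)
    rw [hA0] at this
    have he : pA[1]'(by omega) = y := by rw [← hAL]; congr 1; omega
    rwa [he] at this
  have h3B : 3 ≤ pB.length := by
    by_contra h
    have hl2 : pB.length = 2 := by omega
    apply hnadj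
    have := hBc 0 (by omega)
    rw [hB0] at this
    have he : pB[1]'(by omega) = y := by rw [← hBL]; congr 1; omega
    rwa [he] at this
  set n := pA.length + pB.length - 2 with hn
  have hn4 : 4 ≤ n := by omega
  -- interior membership
  have hintA : ∀ i, (hi : i < pA.length) → 0 < i → i < pA.length - 1 → pA[i] ∈ tA := by
    intro i hi h0 h1
    have hm := hAm _ (List.getElem_mem hi)
    rcases Finset.mem_insert.1 hm with hx | hm
    · exfalso
      rw [← hA0] at hx
      have := (hAnd.getElem_inj_iff).1 hx
      omega
    rcases Finset.mem_insert.1 hm with hy | hm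
    · exfalso
      rw [← hAL] at hy
      have := (hAnd.getElem_inj_iff).1 hy
      omega
    · exact hm
  have hintB : ∀ i, (hi : i < pB.length) → 0 < i → i < pB.length - 1 → pB[i] ∈ tB := by
    intro i hi h0 h1
    have hm := hBm _ (List.getElem_mem hi)
    rcases Finset.mem_insert.1 hm with hx | hm
    · exfalso
      rw [← hB0] at hx
      have := (hBnd.getElem_inj_iff).1 hx
      omega
    rcases Finset.mem_insert.1 hm with hy | hm
    · exfalso
      rw [← hBL] at hy
      have := (hBnd.getElem_inj_iff).1 hy
      omega
    · exact hm
  -- the cycle function on ℕ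
  set F : ℕ → V := fun a => if h : a < pA.length then pA[a] else pB.getD (n - a) x with hF
  have hFA : ∀ a, (h : a < pA.length) → F a = pA[a] := by
    intro a h; simp only [hF, dif_pos h]
  have hFB : ∀ a, (h1 : pA.length ≤ a) → (h2 : a < n) →
      F a = pB[n - a]'(by omega) := by
    intro a h1 h2
    simp only [hF, dif_neg (by omega : ¬ a < pA.length)]
    exact List.getD_eq_getElem _ _ (by omega)
  -- adjacency characterization inside each path
  have adjA : ∀ a b, (ha : a < pA.length) → (hb : b < pA.length) → a < b →
      (G.Adj (pA[a]'ha) (pA[b]'hb) ↔ b = a + 1) := by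
    intro a b ha hb hab
    constructor
    · intro h
      by_contra hne
      exact hAf a b ha hb (by omega) h
    · rintro rfl
      exact hAc a hb
  have adjB : ∀ a b, (ha : a < pB.length) → (hb : b < pB.length) → a < b →
      (G.Adj (pB[a]'ha) (pB[b]'hb) ↔ b = a + 1) := by
    intro a b ha hb hab
    constructor
    · intro h
      by_contra hne
      exact hBf a b ha hb (by omega) h
    · rintro rfl
      exact hBc a hb
  -- main nat-level claim for a < b
  have main : ∀ a b, a < b → b < n →
      (G.Adj (F a) (F b) ↔ (b = a + 1 ∨ (a = 0 ∧ b = n - 1))) := by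
    intro a b hab hbn
    rcases Nat.lt_or_ge b pA.length with hbA | hbB
    · -- both in A-path
      rw [hFA a (by omega), hFA b hbA, adjA a b (by omega) hbA hab]
      constructor
      · intro h; exact Or.inl h
      · rintro (h | ⟨rfl, h⟩)
        · exact h
        · omega
    · -- b in B-interior
      have hjb1 : 1 ≤ n - b := by omega
      have hjb2 : n - b ≤ pB.length - 2 := by omega
      rw [hFB b hbB hbn]
      rcases Nat.lt_or_ge a pA.length with haA | haB
      · rw [hFA a haA]
        rcases Nat.eq_zero_or_pos a with rfl | hapos
        · -- a = 0 : x vs B-interior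
          have hx0 : pA[0]'(by omega) = pB[0]'(by omega) := by rw [hA0, hB0]
          rw [hx0, adjB 0 (n - b) (by omega) (by omega) (by omega)]
          constructor
          · intro h; exact Or.inr ⟨rfl, by omega⟩
          · rintro (h | ⟨_, h⟩) <;> omega
        · rcases Nat.lt_or_ge a (pA.length - 1) with haK | haK
          · -- a interior of A
            have hAmem := hintA a haA hapos haK
            have hBmem := hintB (n - b) (by omega) (by omega) (by omega)
            constructor
            · intro h; exact absurd h (hedge _ hAmem _ hBmem)
            · rintro (h | ⟨h, _⟩) <;> omega
          · -- a = pA.length - 1 : y vs B-interior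
            have haE : a = pA.length - 1 := by omega
            subst haE
            have hy : pA[pA.length - 1]'(by omega) = pB[pB.length - 1]'(by omega) := by
              rw [hAL, hBL]
            rw [hy, G.adj_comm, adjB (n - b) (pB.length - 1) (by omega) (by omega) (by omega)]
            constructor
            · intro h; left; omega
            · rintro (h | ⟨h, _⟩) <;> omega
      · -- both in B part
        rw [hFB a haB (by omega), G.adj_comm,
          adjB (n - b) (n - a) (by omega) (by omega) (by omega)]
        constructor
        · intro h; left; omega
        · rintro (h | ⟨h, _⟩) <;> omega
  -- injectivity at nat level
  have Finj : ∀ a b, a < b → b < n → F a ≠ F b := by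
    intro a b hab hbn
    rcases Nat.lt_or_ge b pA.length with hbA | hbB
    · rw [hFA a (by omega), hFA b hbA]
      intro h
      have := (hAnd.getElem_inj_iff).1 h
      omega
    · have hBmem := hintB (n - b) (by omega) (by omega) (by omega)
      rw [hFB b hbB hbn]
      rcases Nat.lt_or_ge a pA.length with haA | haB
      · rw [hFA a haA]
        rcases Nat.eq_zero_or_pos a with rfl | hapos
        · rw [hA0]; intro h; rw [h] at hxB; exact hxB hBmem
        · rcases Nat.lt_or_ge a (pA.length - 1) with haK | haK
          · have hAmem := hintA a haA hapos haK
            intro h; rw [h] at hAmem; exact hdisjT _ hAmem hBmem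
          · have haE : a = pA.length - 1 := by omega
            subst haE
            rw [hAL]; intro h; rw [h] at hyB; exact hyB hBmem
      · rw [hFB a haB (by omega)]
        intro h
        have := (hBnd.getElem_inj_iff).1 h
        omega
  -- pass to ZMod n
  haveI : NeZero n := ⟨by omega⟩
  haveI : Fact (1 < n) := ⟨by omega⟩
  set f : ZMod n → V := fun i => F i.val with hf
  have hfinj : Function.Injective f := by
    intro i j h
    simp only [hf] at h
    rcases lt_trichotomy i.val j.val with hlt | heq | hgt
    · exact absurd h (Finj _ _ hlt (ZMod.val_lt j))
    · exact ZMod.val_injective n heq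
    · exact absurd h.symm (Finj _ _ hgt (ZMod.val_lt i))
  -- val translation for successor
  have hvit : ∀ i j : ZMod n, (j = i + 1) ↔ j.val = (i.val + 1) % n := by
    intro i j
    rw [← (ZMod.val_injective n).eq_iff, ZMod.val_add, ZMod.val_one]
  -- nat-level claim (symmetric)
  have claim2 : ∀ a b, a < n → b < n →
      (G.Adj (F a) (F b) ↔ (b = (a + 1) % n ∨ a = (b + 1) % n)) := by
    have modlem : ∀ a b : ℕ, a < b → b < n → (b = (a + 1) % n ↔ b = a + 1) := by
      intro a b hab hbn
      rw [Nat.mod_eq_of_lt (by omega)]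
    have modlem2 : ∀ a b : ℕ, a < b → b < n → (a = (b + 1) % n ↔ (a = 0 ∧ b = n - 1)) := by
      intro a b hab hbn
      rcases Nat.lt_or_ge (b + 1) n with h | h
      · rw [Nat.mod_eq_of_lt h]
        constructor
        · intro hh; omega
        · rintro ⟨rfl, hh⟩; omega
      · have hbn1 : b + 1 = n := by omega
        rw [hbn1, Nat.mod_self]
        constructor
        · intro hh; omega
        · rintro ⟨rfl, hh⟩; rfl
    have sym : ∀ a b, a < b → b < n →
        (G.Adj (F a) (F b) ↔ (b = (a + 1) % n ∨ a = (b + 1) % n)) := by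
      intro a b hab hbn
      rw [main a b hab hbn, modlem a b hab hbn, modlem2 a b hab hbn]
    intro a b han hbn
    rcases lt_trichotomy a b with h | rfl | h
    · exact sym a b h hbn
    · constructor
      · intro hadj; exact absurd hadj (G.irrefl)
      · rintro (h | h)
        all_goals {
          exfalso
          rcases Nat.lt_or_ge (a + 1) n with hh | hh
          · rw [Nat.mod_eq_of_lt hh] at h; omega
          · have : a + 1 = n := by omega
            rw [this, Nat.mod_self] at h; omega
        }
    · rw [G.adj_comm, sym b a h han, or_comm]
  -- contradiction with chordality
  apply hG n hn4 f hfinj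
  intro i j
  rw [hvit i j, hvit j i]
  exact claim2 i.val j.val (ZMod.val_lt i) (ZMod.val_lt j)

lemma sep_clique {G : SimpleGraph V} (hG : IsChordal G) {A B : Finset V} {x y : V}
    (hxy : x ≠ y)
    (hxB : x ∉ B) (hyB : y ∉ B)
    (hdisj : ∀ u ∈ A, u ∉ B)
    (hedge : ∀ u ∈ A, ∀ v ∈ B, ¬ G.Adj u v)
    (hrA : GReach G (insert x (insert y A)) x y)
    (hrB : GReach G (insert x (insert y B)) x y) : G.Adj x y := by
  by_contra hnadj
  obtain ⟨pA, hA2, hAnd, hAh, hAl, hAm, hAc, hAf⟩ := exists_induced_path hrA hxy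
  obtain ⟨pB, hB2, hBnd, hBh, hBl, hBm, hBc, hBf⟩ := exists_induced_path hrB hxy
  exact two_path_cycle hG hxy hnadj hxB hyB hdisj hedge
    hA2 hAnd hAh hAl hAm hAc hAf hB2 hBnd hBh hBl hBm hBc hBf

def IsSimp (G : SimpleGraph V) (s : Finset V) (v : V) : Prop :=
  v ∈ s ∧ ∀ a ∈ s, ∀ b ∈ s, G.Adj v a → G.Adj v b → a ≠ b → G.Adj a b

lemma key {G : SimpleGraph V} (hG : IsChordal G) :
    ∀ n : ℕ, ∀ s : Finset V, s.card ≤ n → s.Nonempty →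
      (∃ v, IsSimp G s v) ∧
      (∀ a ∈ s, ∀ b ∈ s, a ≠ b → ¬ G.Adj a b →
        ∃ v w, IsSimp G s v ∧ IsSimp G s w ∧ v ≠ w ∧ ¬ G.Adj v w) := by
  intro n
  induction n with
  | zero =>
    intro s hcard hne
    exfalso
    obtain ⟨v, hv⟩ := hne
    have := Finset.card_pos.2 ⟨v, hv⟩
    omega
  | succ n ih =>
    intro s hcard hne
    have part2 : ∀ a ∈ s, ∀ b ∈ s, a ≠ b → ¬ G.Adj a b →
        ∃ v w, IsSimp G s v ∧ IsSimp G s w ∧ v ≠ w ∧ ¬ G.Adj v w := by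
      intro a ha b hb hab hnadj
      classical
      set Sep : Finset V → Prop :=
        fun S => S ⊆ s ∧ a ∉ S ∧ b ∉ S ∧ ¬ GReach G (s \ S) a b with hSepDef
      have hbase : Sep (s \ {a, b}) := by
        refine ⟨Finset.sdiff_subset, by simp, by simp, ?_⟩
        have hsd : s \ (s \ {a, b}) = {a, b} := by
          rw [Finset.sdiff_sdiff_self_left]
          exact Finset.inter_eq_right.2 (Finset.insert_subset_iff.2 ⟨ha, by simpa using hb⟩)
        rw [hsd]
        rintro ⟨haab, hr⟩
        rcases hr.cases_head with heq | ⟨c, hc, _⟩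
        · exact hab heq
        · rcases Finset.mem_insert.1 hc.2.2 with rfl | hcb
          · exact G.irrefl hc.1
          · have : c = b := by simpa using hcb
            subst this
            exact hnadj hc.1
      have hne' : {k | ∃ S, Sep S ∧ S.card = k}.Nonempty := ⟨_, _, hbase, rfl⟩
      obtain ⟨k₀, ⟨S, hSsep, hk⟩, hmin⟩ := Nat.lt_wfRel.wf.has_min _ hne'
      have hminS : ∀ S', Sep S' → S.card ≤ S'.card := by
        intro S' h'
        have h2 := hmin S'.card ⟨S', h', rfl⟩
        simp only [Nat.lt_wfRel, WellFoundedRelation.rel] at h2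
        omega
      obtain ⟨hSsub, haS, hbS, hSsepr⟩ := hSsep
      set t := s \ S with ht
      have hat : a ∈ t := Finset.mem_sdiff.2 ⟨ha, haS⟩
      have hbt : b ∈ t := Finset.mem_sdiff.2 ⟨hb, hbS⟩
      set A := t.filter (fun u => GReach G t a u) with hA
      set B := t.filter (fun u => GReach G t b u) with hB
      have hAt : A ⊆ t := Finset.filter_subset _ _
      have hBt : B ⊆ t := Finset.filter_subset _ _
      have hAs : A ⊆ s := hAt.trans Finset.sdiff_subset
      have hBs : B ⊆ s := hBt.trans Finset.sdiff_subset
      have haA : a ∈ A := Finset.mem_filter.2 ⟨hat, GReach.refl hat⟩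
      have hbB : b ∈ B := Finset.mem_filter.2 ⟨hbt, GReach.refl hbt⟩
      have hreachA : ∀ u ∈ A, GReach G t a u := fun u hu => (Finset.mem_filter.1 hu).2
      have hreachB : ∀ u ∈ B, GReach G t b u := fun u hu => (Finset.mem_filter.1 hu).2
      have hclA : ∀ u ∈ A, ∀ w, G.Adj u w → w ∈ t → w ∈ A := fun u hu w hadj hw =>
        Finset.mem_filter.2 ⟨hw, (hreachA u hu).tail hadj hw⟩
      have hclB : ∀ u ∈ B, ∀ w, G.Adj u w → w ∈ t → w ∈ B := fun u hu w hadj hw =>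
        Finset.mem_filter.2 ⟨hw, (hreachB u hu).tail hadj hw⟩
      have hAB : ∀ u ∈ A, u ∉ B := fun u hu hu' =>
        hSsepr ((hreachA u hu).trans (hreachB u hu').symm)
      have hedgeAB : ∀ u ∈ A, ∀ w ∈ B, ¬ G.Adj u w := fun u hu w hw hadj =>
        hAB w (hclA u hu w hadj (hBt hw)) hw
      -- each separator vertex has a neighbor in A and in B
      have hins : ∀ x' ∈ S, s \ S.erase x' = insert x' t := by
        intro x' hx'
        have hx's : x' ∈ s := hSsub hx'
        ext u
        simp only [Finset.mem_sdiff, Finset.mem_erase, Finset.mem_insert, ht, not_and]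
        constructor
        · rintro ⟨hus, hne2⟩
          by_cases h : u = x'
          · exact Or.inl h
          · exact Or.inr ⟨hus, fun hS => (hne2 h) hS⟩
        · rintro (rfl | ⟨hus, hnS⟩)
          · exact ⟨hx's, fun hc => absurd rfl hc⟩
          · exact ⟨hus, fun _ hS => hnS hS⟩
      have hnbrA : ∀ x' ∈ S, ∃ u ∈ A, G.Adj x' u := by
        intro x' hx'
        by_contra hno
        push_neg at hno
        have hsep' : Sep (S.erase x') := by
          refine ⟨(Finset.erase_subset _ _).trans hSsub,
            fun h => haS (Finset.mem_of_mem_erase h),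
            fun h => hbS (Finset.mem_of_mem_erase h), ?_⟩
          rw [hins x' hx']
          intro hr
          rcases hr.avoid hat with ⟨_, hr'⟩ | ⟨u, hru, hadj⟩
          · exact hSsepr hr'
          · exact hno u (Finset.mem_filter.2 ⟨hru.mem_right, hru⟩) hadj.symm
        have h1 := hminS _ hsep'
        have h2 := Finset.card_erase_of_mem hx'
        have h3 : 0 < S.card := Finset.card_pos.2 ⟨x', hx'⟩
        omega
      have hnbrB : ∀ x' ∈ S, ∃ u ∈ B, G.Adj x' u := by
        intro x' hx'
        by_contra hno
        push_neg at hno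
        have hsep' : Sep (S.erase x') := by
          refine ⟨(Finset.erase_subset _ _).trans hSsub,
            fun h => haS (Finset.mem_of_mem_erase h),
            fun h => hbS (Finset.mem_of_mem_erase h), ?_⟩
          rw [hins x' hx']
          intro hr
          rcases hr.symm.avoid hbt with ⟨_, hr'⟩ | ⟨u, hru, hadj⟩
          · exact hSsepr hr'.symm
          · exact hno u (Finset.mem_filter.2 ⟨hru.mem_right, hru⟩) hadj.symm
        have h1 := hminS _ hsep'
        have h2 := Finset.card_erase_of_mem hx'
        have h3 : 0 < S.card := Finset.card_pos.2 ⟨x', hx'⟩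
        omega
      -- S is a clique
      have hSclique : ∀ p ∈ S, ∀ q ∈ S, p ≠ q → G.Adj p q := by
        intro p hp q hq hpq
        obtain ⟨uA, huA, hadjA⟩ := hnbrA p hp
        obtain ⟨uA', huA', hadjA'⟩ := hnbrA q hq
        obtain ⟨uB, huB, hadjB⟩ := hnbrB p hp
        obtain ⟨uB', huB', hadjB'⟩ := hnbrB q hq
        have hpt : p ∉ t := fun h => (Finset.mem_sdiff.1 h).2 hp
        have hqt : q ∉ t := fun h => (Finset.mem_sdiff.1 h).2 hq
        have hcompA : GReach G A uA uA' := by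
          have h1 : GReach G t uA uA' := (hreachA _ huA).symm.trans (hreachA _ huA')
          refine h1.strengthen ?_
          intro z hz
          exact Finset.mem_filter.2 ⟨hz.mem_right, (hreachA _ huA).trans hz⟩
        have hcompB : GReach G B uB uB' := by
          have h1 : GReach G t uB uB' := (hreachB _ huB).symm.trans (hreachB _ huB')
          refine h1.strengthen ?_
          intro z hz
          exact Finset.mem_filter.2 ⟨hz.mem_right, (hreachB _ huB).trans hz⟩
        have hrAq : GReach G (insert p (insert q A)) p q := by
          have hsub : A ⊆ insert p (insert q A) := fun u hu => by simp [hu]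
          exact GReach.head (by simp) hadjA
            (((hcompA.mono hsub)).tail hadjA'.symm (by simp))
        have hrBq : GReach G (insert p (insert q B)) p q := by
          have hsub : B ⊆ insert p (insert q B) := fun u hu => by simp [hu]
          exact GReach.head (by simp) hadjB
            (((hcompB.mono hsub)).tail hadjB'.symm (by simp))
        exact sep_clique hG hpq (fun h => hpt (hBt h)) (fun h => hqt (hBt h))
          hAB hedgeAB hrAq hrBq
      -- IH on A ∪ S
      have hbAS : b ∉ A ∪ S := by
        intro h
        rcases Finset.mem_union.1 h with h' | h'
        · exact hSsepr (hreachA b h')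
        · exact hbS h'
      have haBS : a ∉ B ∪ S := by
        intro h
        rcases Finset.mem_union.1 h with h' | h'
        · exact hSsepr (hreachB a h').symm
        · exact haS h'
      have hAScard : (A ∪ S).card ≤ n := by
        have hsub : A ∪ S ⊆ s := Finset.union_subset hAs hSsub
        have := Finset.card_lt_card ((Finset.ssubset_iff_of_subset hsub).2 ⟨b, hb, hbAS⟩)
        omega
      have hBScard : (B ∪ S).card ≤ n := by
        have hsub : B ∪ S ⊆ s := Finset.union_subset hBs hSsub
        have := Finset.card_lt_card ((Finset.ssubset_iff_of_subset hsub).2 ⟨a, ha, haBS⟩)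
        omega
      obtain ⟨hexA, hpairA⟩ := ih (A ∪ S) hAScard ⟨a, Finset.mem_union_left _ haA⟩
      obtain ⟨hexB, hpairB⟩ := ih (B ∪ S) hBScard ⟨b, Finset.mem_union_left _ hbB⟩
      have hvA : ∃ v ∈ A, IsSimp G (A ∪ S) v := by
        by_cases hcomp : ∀ u ∈ A ∪ S, ∀ w ∈ A ∪ S, u ≠ w → G.Adj u w
        · exact ⟨a, haA, Finset.mem_union_left _ haA,
            fun p hp q hq _ _ hpq => hcomp p hp q hq hpq⟩
        · push_neg at hcomp
          obtain ⟨u, hu, w, hw, huw, hnuw⟩ := hcomp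
          obtain ⟨v, v', hsv, hsv', hvv', hnvv'⟩ := hpairA u hu w hw huw hnuw
          rcases Finset.mem_union.1 hsv.1 with h | h
          · exact ⟨v, h, hsv⟩
          · rcases Finset.mem_union.1 hsv'.1 with h' | h'
            · exact ⟨v', h', hsv'⟩
            · exact absurd (hSclique v h v' h' hvv') hnvv'
      have hvB : ∃ v ∈ B, IsSimp G (B ∪ S) v := by
        by_cases hcomp : ∀ u ∈ B ∪ S, ∀ w ∈ B ∪ S, u ≠ w → G.Adj u w
        · exact ⟨b, hbB, Finset.mem_union_left _ hbB,
            fun p hp q hq _ _ hpq => hcomp p hp q hq hpq⟩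
        · push_neg at hcomp
          obtain ⟨u, hu, w, hw, huw, hnuw⟩ := hcomp
          obtain ⟨v, v', hsv, hsv', hvv', hnvv'⟩ := hpairB u hu w hw huw hnuw
          rcases Finset.mem_union.1 hsv.1 with h | h
          · exact ⟨v, h, hsv⟩
          · rcases Finset.mem_union.1 hsv'.1 with h' | h'
            · exact ⟨v', h', hsv'⟩
            · exact absurd (hSclique v h v' h' hvv') hnvv'
      obtain ⟨vA, hvAA, hvAsimp⟩ := hvA
      obtain ⟨vB, hvBB, hvBsimp⟩ := hvB
      have hliftA : IsSimp G s vA := by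
        refine ⟨hAs hvAA, ?_⟩
        intro p hp q hq hadj1 hadj2 hpq
        have hmem : ∀ r ∈ s, G.Adj vA r → r ∈ A ∪ S := by
          intro r hr hadj
          by_cases hrS : r ∈ S
          · exact Finset.mem_union_right _ hrS
          · exact Finset.mem_union_left _
              (hclA vA hvAA r hadj (Finset.mem_sdiff.2 ⟨hr, hrS⟩))
        exact hvAsimp.2 p (hmem p hp hadj1) q (hmem q hq hadj2) hadj1 hadj2 hpq
      have hliftB : IsSimp G s vB := by
        refine ⟨hBs hvBB, ?_⟩
        intro p hp q hq hadj1 hadj2 hpq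
        have hmem : ∀ r ∈ s, G.Adj vB r → r ∈ B ∪ S := by
          intro r hr hadj
          by_cases hrS : r ∈ S
          · exact Finset.mem_union_right _ hrS
          · exact Finset.mem_union_left _
              (hclB vB hvBB r hadj (Finset.mem_sdiff.2 ⟨hr, hrS⟩))
        exact hvBsimp.2 p (hmem p hp hadj1) q (hmem q hq hadj2) hadj1 hadj2 hpq
      exact ⟨vA, vB, hliftA, hliftB,
        fun h => hAB vA hvAA (h ▸ hvBB), hedgeAB vA hvAA vB hvBB⟩
    constructor
    · by_cases hc : ∀ a ∈ s, ∀ b ∈ s, a ≠ b → G.Adj a b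
      · obtain ⟨v, hv⟩ := hne
        exact ⟨v, hv, fun p hp q hq _ _ hpq => hc p hp q hq hpq⟩
      · push_neg at hc
        obtain ⟨a, ha, b, hb, hab, hnadj⟩ := hc
        obtain ⟨v, w, hv, _, _, _⟩ := part2 a ha b hb hab hnadj
        exact ⟨v, hv⟩
    · exact part2


/-- Every chordal graph has a simplicial vertex. -/
theorem stmt_1 {V : Type} [Fintype V] [DecidableEq V] [Nonempty V] (G : SimpleGraph V)
    (hG : IsChordal G) :
    ∃ v : V, G.IsClique ({v} ∪ G.neighborSet v) := by
  classical
  obtain ⟨⟨v, hv⟩, -⟩ := key hG (Fintype.card V) Finset.univ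
    (le_of_eq Finset.card_univ) Finset.univ_nonempty
  refine ⟨v, ?_⟩
  rw [SimpleGraph.isClique_iff]
  intro u hu w hw huw
  simp only [Set.mem_union, Set.mem_singleton_iff, SimpleGraph.mem_neighborSet] at hu hw
  rcases hu with rfl | hu
  · rcases hw with rfl | hw
    · exact absurd rfl huw
    · exact hw
  · rcases hw with rfl | hw
    · exact hu.symm
    · exact hv.2 u (Finset.mem_univ u) w (Finset.mem_univ w) hu hw huw
end

section
/- A finite simple graph is chordal if and only if it admits a simplicial elimination ordering, i.e., an ordering v_1, …, v_n of its vertices such that for each i, the vertex v_i together with those of its neighbors that come after it in the ordering induce a clique. -/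
open Finset

variable {V : Type} [Fintype V] [DecidableEq V]

namespace DiracAux
open SimpleGraph

section generic
variable {V : Type} {G : SimpleGraph V}

lemma getVert_mem_support {u v : V} (p : G.Walk u v) (i : ℕ) :
    p.getVert i ∈ p.support := by
  induction p generalizing i with
  | nil => cases i <;> simp [SimpleGraph.Walk.getVert]
  | cons h q ih =>
    cases i with
    | zero => simp [SimpleGraph.Walk.getVert]
    | succ n => simp only [SimpleGraph.Walk.getVert_cons_succ, SimpleGraph.Walk.support_cons,
        List.mem_cons]; exact Or.inr (ih n)

lemma exists_walk_getVert_left {u v : V} (p : G.Walk u v) (i : ℕ) :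
    ∃ r : G.Walk u (p.getVert i), r.length ≤ i := by
  induction p generalizing i with
  | nil => cases i <;> exact ⟨SimpleGraph.Walk.nil, by simp⟩
  | cons h q ih =>
    cases i with
    | zero => exact ⟨SimpleGraph.Walk.nil, le_of_eq rfl⟩
    | succ n =>
      obtain ⟨r, hr⟩ := ih n
      exact ⟨SimpleGraph.Walk.cons h r, by simpa using hr⟩

lemma exists_walk_getVert_right {u v : V} (p : G.Walk u v) (i : ℕ) :
    ∃ r : G.Walk (p.getVert i) v, r.length ≤ p.length - i := by
  induction p generalizing i with
  | nil => cases i <;> exact ⟨SimpleGraph.Walk.nil, by simp⟩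
  | cons h q ih =>
    cases i with
    | zero => exact ⟨SimpleGraph.Walk.cons h q, le_of_eq rfl⟩
    | succ n =>
      obtain ⟨r, hr⟩ := ih n
      exact ⟨r, by simpa using hr.trans (by omega)⟩

lemma shortest_no_chord {u v : V} (p : G.Walk u v) (hp : p.length = G.dist u v)
    {i j : ℕ} (hij : i + 2 ≤ j) (hj : j ≤ p.length) :
    ¬ G.Adj (p.getVert i) (p.getVert j) := by
  intro hadj
  obtain ⟨r1, hr1⟩ := exists_walk_getVert_left p i
  obtain ⟨r2, hr2⟩ := exists_walk_getVert_right p j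
  have := SimpleGraph.dist_le (r1.append (SimpleGraph.Walk.cons hadj r2))
  rw [← hp] at this
  simp only [SimpleGraph.Walk.length_append, SimpleGraph.Walk.length_cons] at this
  omega

lemma shortest_inj {u v : V} (p : G.Walk u v) (hp : p.length = G.dist u v)
    {i j : ℕ} (hij : i < j) (hj : j ≤ p.length) :
    p.getVert i ≠ p.getVert j := by
  intro heq
  obtain ⟨r1, hr1⟩ := exists_walk_getVert_left p i
  obtain ⟨r2, hr2⟩ := exists_walk_getVert_right p j
  have := SimpleGraph.dist_le (r1.append (r2.copy heq.symm rfl))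
  rw [← hp] at this
  simp only [SimpleGraph.Walk.length_append, SimpleGraph.Walk.length_copy] at this
  omega

lemma getVert_transfer {H : SimpleGraph V} {u v : V} (p : G.Walk u v)
    (h : ∀ e ∈ p.edges, e ∈ H.edgeSet) (i : ℕ) :
    (p.transfer H h).getVert i = p.getVert i := by
  induction p generalizing i with
  | nil => rfl
  | cons ha q ih =>
    cases i with
    | zero => rfl
    | succ n => exact ih _ n

end generic

lemma zmod_succ_iff {n : ℕ} (hn : 4 ≤ n) (i j : ZMod n) :
    j = i + 1 ↔ (j.val = i.val + 1 ∨ (i.val = n - 1 ∧ j.val = 0)) := by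
  haveI : NeZero n := ⟨by omega⟩
  have hiv : i.val < n := ZMod.val_lt i
  have hjv : j.val < n := ZMod.val_lt j
  have key : i + 1 = ((i.val + 1 : ℕ) : ZMod n) := by
    push_cast [ZMod.natCast_zmod_val]; ring
  constructor
  · rintro rfl
    rcases eq_or_lt_of_le (Nat.succ_le_of_lt hiv) with h | h
    · right
      refine ⟨by omega, ?_⟩
      have h' : i.val + 1 = n := h
      rw [key, h']
      simp [ZMod.natCast_self]
    · left
      rw [key, ZMod.val_cast_of_lt h]
  · rintro (h | ⟨h1, h2⟩)
    · apply ZMod.val_injective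
      rw [key, ZMod.val_cast_of_lt (by omega), h]
    · apply ZMod.val_injective
      rw [key, h1, h2]
      have : (n - 1 + 1 : ℕ) = n := by omega
      rw [this]
      simp [ZMod.natCast_self]

variable {V : Type} [Fintype V] [DecidableEq V]

lemma no_long_cycle {G : SimpleGraph V}
    (hG : IsChordal G) {s t : V} (p : G.Walk s t) (q : G.Walk t s)
    (hp2 : 2 ≤ p.length) (hq2 : 2 ≤ q.length)
    (hpchord : ∀ i j, i + 2 ≤ j → j ≤ p.length → ¬ G.Adj (p.getVert i) (p.getVert j))
    (hqchord : ∀ i j, i + 2 ≤ j → j ≤ q.length → ¬ G.Adj (q.getVert i) (q.getVert j))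
    (hpinj : ∀ i j, i < j → j ≤ p.length → p.getVert i ≠ p.getVert j)
    (hqinj : ∀ i j, i < j → j ≤ q.length → q.getVert i ≠ q.getVert j)
    (hcross_ne : ∀ i j, 0 < i → i < p.length → 0 < j → j < q.length →
        p.getVert i ≠ q.getVert j)
    (hcross_nadj : ∀ i j, 0 < i → i < p.length → 0 < j → j < q.length →
        ¬ G.Adj (p.getVert i) (q.getVert j)) : False := by
  set Lp := p.length with hLp
  set Lq := q.length with hLq
  set n := Lp + Lq with hn
  have hn4 : 4 ≤ n := by omega
  haveI : NeZero n := ⟨by omega⟩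
  set g : ℕ → V := fun k => if k < Lp then p.getVert k else q.getVert (k - Lp) with hg
  have gp : ∀ k, k ≤ Lp → g k = p.getVert k := by
    intro k hk
    by_cases h : k < Lp
    · simp [hg, h]
    · have hk' : k = Lp := by omega
      subst hk'
      simp only [hg, lt_irrefl, if_neg h, Nat.sub_self, SimpleGraph.Walk.getVert_zero]
      exact (p.getVert_length).symm
  have gq : ∀ k, Lp ≤ k → g k = q.getVert (k - Lp) := by
    intro k hk
    simp [hg, Nat.not_lt.mpr hk]
  have g0q : g 0 = q.getVert Lq := by
    rw [gp 0 (by omega), p.getVert_zero, q.getVert_length]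
  have gne : ∀ a b, a < b → b < n → g a ≠ g b := by
    intro a b hab hbn
    by_cases hb : b ≤ Lp
    · rw [gp a (by omega), gp b hb]
      exact hpinj a b hab hb
    · push_neg at hb
      by_cases ha : a < Lp
      · rcases Nat.eq_zero_or_pos a with rfl | ha0
        · rw [g0q, gq b (by omega)]
          exact (hqinj (b - Lp) Lq (by omega) le_rfl).symm
        · rw [gp a (by omega), gq b (by omega)]
          exact hcross_ne a (b - Lp) ha0 ha (by omega) (by omega)
      · push_neg at ha
        rw [gq a ha, gq b (by omega)]
        exact hqinj (a - Lp) (b - Lp) (by omega) (by omega)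
  have gnadj : ∀ a b, a < b → b < n → b ≠ a + 1 → ¬(a = 0 ∧ b = n - 1) →
      ¬ G.Adj (g a) (g b) := by
    intro a b hab hbn hne1 hne2
    by_cases hb : b ≤ Lp
    · rw [gp a (by omega), gp b hb]
      exact hpchord a b (by omega) hb
    · push_neg at hb
      by_cases ha : a < Lp
      · rcases Nat.eq_zero_or_pos a with rfl | ha0
        · rw [g0q, gq b (by omega)]
          intro hadj
          exact hqchord (b - Lp) Lq (by omega) le_rfl hadj.symm
        · rw [gp a (by omega), gq b (by omega)]
          exact hcross_nadj a (b - Lp) ha0 ha (by omega) (by omega)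
      · push_neg at ha
        rw [gq a ha, gq b (by omega)]
        exact hqchord (a - Lp) (b - Lp) (by omega) (by omega)
  have gadj : ∀ a, a < n → G.Adj (g a) (g ((a + 1) % n)) := by
    intro a ha
    by_cases h1 : a + 1 ≤ Lp
    · rw [Nat.mod_eq_of_lt (by omega), gp a (by omega), gp (a + 1) h1]
      exact p.adj_getVert_succ (by omega)
    · push_neg at h1
      by_cases h2 : a + 1 < n
      · rw [Nat.mod_eq_of_lt h2, gq a (by omega), gq (a + 1) (by omega)]
        have : a + 1 - Lp = (a - Lp) + 1 := by omega
        rw [this]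
        exact q.adj_getVert_succ (by omega)
      · have h3 : a + 1 = n := by omega
        rw [h3, Nat.mod_self, g0q, gq a (by omega)]
        have h4 : Lq = (a - Lp) + 1 := by omega
        rw [h4]
        exact q.adj_getVert_succ (by omega)
  set f : ZMod n → V := fun i => g i.val with hf
  have finj : Function.Injective f := by
    intro i j hij
    rcases lt_trichotomy i.val j.val with h | h | h
    · exact absurd hij (gne i.val j.val h (ZMod.val_lt j))
    · exact ZMod.val_injective n h
    · exact absurd hij.symm (gne j.val i.val h (ZMod.val_lt i))
  have hchar : ∀ i j : ZMod n, G.Adj (f i) (f j) ↔ j = i + 1 ∨ i = j + 1 := by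
    have succ_adj : ∀ i j : ZMod n, j = i + 1 → G.Adj (f i) (f j) := by
      intro i j hj
      have hadj := gadj i.val (ZMod.val_lt i)
      rcases (zmod_succ_iff hn4 i j).mp hj with h | ⟨h1, h2⟩
      · have hjn : j.val < n := ZMod.val_lt j
        rw [Nat.mod_eq_of_lt (by omega), ← h] at hadj
        exact hadj
      · have e : (i.val + 1) % n = j.val := by
          rw [h1, h2]
          have : n - 1 + 1 = n := by omega
          rw [this, Nat.mod_self]
        rw [e] at hadj
        exact hadj
    intro i j
    constructor
    · intro hadj
      by_contra hcon
      push_neg at hcon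
      obtain ⟨hc1, hc2⟩ := hcon
      rcases lt_trichotomy i.val j.val with h | h | h
      · exact gnadj i.val j.val h (ZMod.val_lt j)
          (fun he => hc1 ((zmod_succ_iff hn4 i j).mpr (Or.inl he)))
          (fun hab => hc2 ((zmod_succ_iff hn4 j i).mpr (Or.inr ⟨hab.2, hab.1⟩))) hadj
      · have : i = j := ZMod.val_injective n h
        subst this
        exact G.loopless.irrefl _ hadj
      · exact gnadj j.val i.val h (ZMod.val_lt i)
          (fun he => hc2 ((zmod_succ_iff hn4 j i).mpr (Or.inl he)))
          (fun hab => hc1 ((zmod_succ_iff hn4 i j).mpr (Or.inr ⟨hab.2, hab.1⟩))) hadj.symm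
    · rintro (h | h)
      · exact succ_adj i j h
      · exact (succ_adj j i h).symm
  exact hG n hn4 f finj hchar

/-- The graph induced on `W` (isolated outside). -/
def ind (G : SimpleGraph V) (W : Finset V) : SimpleGraph V where
  Adj u v := G.Adj u v ∧ u ∈ W ∧ v ∈ W
  symm := ⟨fun u v h => ⟨h.1.symm, h.2.2, h.2.1⟩⟩
  loopless := ⟨fun u h => G.loopless.irrefl u h.1⟩

lemma ind_support_mem {G : SimpleGraph V} {W : Finset V} {u v : V}
    (p : (ind G W).Walk u v) (hu : u ∈ W) : ∀ x ∈ p.support, x ∈ W := by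
  induction p with
  | nil => intro x hx; rw [SimpleGraph.Walk.support_nil, List.mem_singleton] at hx; exact hx ▸ hu
  | cons h q ih =>
    intro x hx
    rw [SimpleGraph.Walk.support_cons, List.mem_cons] at hx
    rcases hx with rfl | hx
    · exact hu
    · exact ih h.2.2 x hx

lemma walk_first_step {G : SimpleGraph V} {U' : Finset V} (U : Finset V) {s c : V}
    (q : (ind G U').Walk s c) (hq : q.IsPath) (hsc : s ≠ c)
    (hUmem : ∀ x ∈ q.support, x ≠ s → x ∈ U) :
    ∃ x, x ∈ U ∧ G.Adj s x ∧ (ind G U).Reachable x c := by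
  cases q with
  | nil => exact absurd rfl hsc
  | @cons _ y _ h q' =>
    have hnodup := hq.support_nodup
    rw [SimpleGraph.Walk.support_cons, List.nodup_cons] at hnodup
    have hsnot : s ∉ q'.support := hnodup.1
    have hmem' : ∀ x ∈ q'.support, x ∈ U := by
      intro x hx
      refine hUmem x ?_ ?_
      · rw [SimpleGraph.Walk.support_cons, List.mem_cons]; exact Or.inr hx
      · rintro rfl; exact hsnot hx
    refine ⟨y, hmem' y q'.start_mem_support, h.1, ⟨q'.transfer (ind G U) ?_⟩⟩
    intro e he
    induction e with
    | h x z =>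
      have hadj : (ind G U').Adj x z := q'.adj_of_mem_edges he
      exact ⟨hadj.1, hmem' x (q'.fst_mem_support_of_mem_edges he),
        hmem' z (q'.snd_mem_support_of_mem_edges he)⟩

/-- `v` is simplicial within `W`. -/
def SimpIn (G : SimpleGraph V) (W : Finset V) (v : V) : Prop :=
  ∀ ⦃x⦄, x ∈ W → ∀ ⦃y⦄, y ∈ W → G.Adj v x → G.Adj v y → x ≠ y → G.Adj x y

lemma dirac_aux {G : SimpleGraph V} (hG : IsChordal G) :
    ∀ N : ℕ, ∀ W : Finset V, W.card = N →
      G.IsClique ↑W ∨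
        ∃ x ∈ W, ∃ y ∈ W, x ≠ y ∧ ¬ G.Adj x y ∧ SimpIn G W x ∧ SimpIn G W y := by
  classical
  intro N
  induction N using Nat.strong_induction_on with
  | _ N IH =>
  intro W hWcard
  by_cases hcl : G.IsClique ↑W
  · exact Or.inl hcl
  right
  rw [SimpleGraph.isClique_iff, Set.Pairwise] at hcl
  push_neg at hcl
  obtain ⟨a, ha, b, hb, hab, hnadj⟩ := hcl
  rw [Finset.mem_coe] at ha hb
  -- the full complement is a separator
  have hbase : ¬ (ind G (W \ (W \ {a, b}))).Reachable a b := by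
    rintro ⟨p⟩
    cases p with
    | nil => exact hab rfl
    | @cons _ x _ h q =>
      have hxU := h.2.2
      rw [Finset.mem_sdiff] at hxU
      have hxab : x ∈ ({a, b} : Finset V) := by
        by_contra hc
        exact hxU.2 (Finset.mem_sdiff.mpr ⟨hxU.1, hc⟩)
      rw [Finset.mem_insert, Finset.mem_singleton] at hxab
      rcases hxab with rfl | rfl
      · exact G.loopless.irrefl x h.1
      · exact hnadj h.1
  -- pick a minimum-size separator S
  let SepSet : Finset (Finset V) :=
    (W \ {a, b}).powerset.filter (fun S => ¬ (ind G (W \ S)).Reachable a b)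
  have hSepNe : (W \ {a, b}) ∈ SepSet := by
    simp only [SepSet, Finset.mem_filter, Finset.mem_powerset]
    exact ⟨le_refl _, hbase⟩
  obtain ⟨S, hS, hmin⟩ := Finset.exists_min_image SepSet Finset.card ⟨_, hSepNe⟩
  simp only [SepSet, Finset.mem_filter, Finset.mem_powerset] at hS
  obtain ⟨hSsub, hSsep⟩ := hS
  set U : Finset V := W \ S with hU
  have hanS : a ∉ S := by
    intro h
    have := hSsub h
    simp at this
  have hbnS : b ∉ S := by
    intro h
    have := hSsub h
    simp at this
  have haU : a ∈ U := Finset.mem_sdiff.mpr ⟨ha, hanS⟩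
  have hbU : b ∈ U := Finset.mem_sdiff.mpr ⟨hb, hbnS⟩
  set A : Finset V := U.filter (fun v => (ind G U).Reachable a v) with hA
  set B : Finset V := U.filter (fun v => (ind G U).Reachable b v) with hB
  have haA : a ∈ A := Finset.mem_filter.mpr ⟨haU, Reachable.refl a⟩
  have hbB : b ∈ B := Finset.mem_filter.mpr ⟨hbU, Reachable.refl b⟩
  have hAU : A ⊆ U := Finset.filter_subset _ _
  have hBU : B ⊆ U := Finset.filter_subset _ _
  have hAB : ∀ x, x ∈ A → x ∉ B := by
    intro x hxA hxB
    exact hSsep (((Finset.mem_filter.mp hxA).2).trans ((Finset.mem_filter.mp hxB).2).symm)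
  have hAclosed : ∀ x ∈ A, ∀ y ∈ U, G.Adj x y → y ∈ A := by
    intro x hx y hy hxy
    have hx' := Finset.mem_filter.mp hx
    exact Finset.mem_filter.mpr ⟨hy, hx'.2.trans (SimpleGraph.Adj.reachable ⟨hxy, hx'.1, hy⟩)⟩
  have hBclosed : ∀ x ∈ B, ∀ y ∈ U, G.Adj x y → y ∈ B := by
    intro x hx y hy hxy
    have hx' := Finset.mem_filter.mp hx
    exact Finset.mem_filter.mpr ⟨hy, hx'.2.trans (SimpleGraph.Adj.reachable ⟨hxy, hx'.1, hy⟩)⟩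
  have hABnadj : ∀ x ∈ A, ∀ y ∈ B, ¬ G.Adj x y := by
    intro x hx y hy hadj
    exact hAB y (hAclosed x hx y (hBU hy) hadj) hy
  have hSnotU : ∀ z ∈ S, z ∉ U := by
    intro z hz hzU
    exact (Finset.mem_sdiff.mp hzU).2 hz
  -- every separator vertex has a neighbor in A and in B
  have hSnbr : ∀ s ∈ S, (∃ x ∈ A, G.Adj s x) ∧ (∃ y ∈ B, G.Adj s y) := by
    intro s hsS
    have hsW := hSsub hsS
    rw [Finset.mem_sdiff, Finset.mem_insert, Finset.mem_singleton] at hsW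
    push_neg at hsW
    obtain ⟨hsW, hsa, hsb⟩ := hsW
    have hreach' : (ind G (W \ S.erase s)).Reachable a b := by
      by_contra hcon
      have hmem : S.erase s ∈ SepSet := by
        simp only [SepSet, Finset.mem_filter, Finset.mem_powerset]
        exact ⟨(Finset.erase_subset _ _).trans hSsub, hcon⟩
      have h1 := hmin _ hmem
      have h2 : (S.erase s).card < S.card := Finset.card_erase_lt_of_mem hsS
      omega
    obtain ⟨p0⟩ := hreach'
    set p := p0.bypass with hpdef
    have hppath : p.IsPath := p0.bypass_isPath
    have haW' : a ∈ W \ S.erase s :=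
      Finset.mem_sdiff.mpr ⟨ha, fun h => hanS (Finset.mem_of_mem_erase h)⟩
    have hsupW : ∀ x ∈ p.support, x ∈ W \ S.erase s := ind_support_mem p haW'
    have toU : ∀ x, x ∈ W \ S.erase s → x ≠ s → x ∈ U := by
      intro x hx hxs
      rw [Finset.mem_sdiff] at hx ⊢
      exact ⟨hx.1, fun hxS => hx.2 (Finset.mem_erase.mpr ⟨hxs, hxS⟩)⟩
    have hs_sup : s ∈ p.support := by
      by_contra hs_sup
      apply hSsep
      refine ⟨(p.transfer (ind G U) ?_)⟩
      intro e he
      induction e with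
      | h x y =>
        have hadj := p.adj_of_mem_edges he
        have hxs : x ≠ s := fun hh => hs_sup (hh ▸ p.fst_mem_support_of_mem_edges he)
        have hys : y ≠ s := fun hh => hs_sup (hh ▸ p.snd_mem_support_of_mem_edges he)
        exact ⟨hadj.1, toU x (hsupW x (p.fst_mem_support_of_mem_edges he)) hxs,
          toU y (hsupW y (p.snd_mem_support_of_mem_edges he)) hys⟩
    constructor
    · -- neighbor in A
      have hmemA : ∀ z ∈ ((p.takeUntil s hs_sup).reverse).support, z ≠ s → z ∈ U := by
        intro z hz hzs
        rw [SimpleGraph.Walk.support_reverse, List.mem_reverse] at hz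
        exact toU z (hsupW z (p.support_takeUntil_subset hs_sup hz)) hzs
      obtain ⟨x, hxU, hsx, hreach⟩ := walk_first_step U (p.takeUntil s hs_sup).reverse
          ((hppath.takeUntil hs_sup).reverse) hsa hmemA
      exact ⟨x, Finset.mem_filter.mpr ⟨hxU, hreach.symm⟩, hsx⟩
    · -- neighbor in B
      have hmemB : ∀ z ∈ (p.dropUntil s hs_sup).support, z ≠ s → z ∈ U := by
        intro z hz hzs
        exact toU z (hsupW z (p.support_dropUntil_subset hs_sup hz)) hzs
      obtain ⟨y, hyU, hsy, hreach⟩ := walk_first_step U (p.dropUntil s hs_sup)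
          (hppath.dropUntil hs_sup) hsb hmemB
      exact ⟨y, Finset.mem_filter.mpr ⟨hyU, hreach.symm⟩, hsy⟩
  -- S is a clique
  have hSclique : ∀ s ∈ S, ∀ t ∈ S, s ≠ t → G.Adj s t := by
    intro s hs t ht hst
    by_contra hnadjst
    have hsA : s ∉ A := fun h => hSnotU s hs (hAU h)
    have htA : t ∉ A := fun h => hSnotU t ht (hAU h)
    have hsB : s ∉ B := fun h => hSnotU s hs (hBU h)
    have htB : t ∉ B := fun h => hSnotU t ht (hBU h)
    have hconn : ∀ (C : Finset V), C = A ∨ C = B →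
        ∀ x ∈ C, ∀ y ∈ C, ∃ w : (ind G U).Walk x y, ∀ z ∈ w.support, z ∈ C := by
      rintro C hC x hx y hy
      have hroot : ∃ r, C = U.filter (fun v => (ind G U).Reachable r v) := by
        rcases hC with rfl | rfl
        exacts [⟨a, rfl⟩, ⟨b, rfl⟩]
      obtain ⟨r, rfl⟩ := hroot
      have hx' := Finset.mem_filter.mp hx
      have hy' := Finset.mem_filter.mp hy
      obtain ⟨w⟩ := hx'.2.symm.trans hy'.2
      refine ⟨w, ?_⟩
      intro z hz
      have hzU : z ∈ U := ind_support_mem w hx'.1 z hz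
      have : (ind G U).Reachable x z := ⟨w.takeUntil z hz⟩
      exact Finset.mem_filter.mpr ⟨hzU, hx'.2.trans this⟩
    have side : ∀ (C : Finset V) (s' t' : V), s' ∉ C → t' ∉ C → s' ≠ t' → ¬ G.Adj s' t' →
        (∀ x ∈ C, ∀ y ∈ C, ∃ w : (ind G U).Walk x y, ∀ z ∈ w.support, z ∈ C) →
        C ⊆ U →
        (∃ x ∈ C, G.Adj s' x) → (∃ y ∈ C, G.Adj t' y) →
        ∃ pw : G.Walk s' t', 2 ≤ pw.length ∧
          (∀ i j, i + 2 ≤ j → j ≤ pw.length → ¬ G.Adj (pw.getVert i) (pw.getVert j)) ∧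
          (∀ i j, i < j → j ≤ pw.length → pw.getVert i ≠ pw.getVert j) ∧
          (∀ i, 0 < i → i < pw.length → pw.getVert i ∈ C) := by
      intro C s' t' hs'C ht'C hs't' hnadj' hCconn hCU hnbrS hnbrT
      obtain ⟨x, hxC, hsx⟩ := hnbrS
      obtain ⟨y, hyC, hty⟩ := hnbrT
      have hs'UC : s' ∈ insert s' (insert t' C) := Finset.mem_insert_self _ _
      have ht'UC : t' ∈ insert s' (insert t' C) :=
        Finset.mem_insert_of_mem (Finset.mem_insert_self _ _)
      have hCUC : ∀ z ∈ C, z ∈ insert s' (insert t' C) :=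
        fun z hz => Finset.mem_insert_of_mem (Finset.mem_insert_of_mem hz)
      have hreach : (ind G (insert s' (insert t' C))).Reachable s' t' := by
        obtain ⟨w, hw⟩ := hCconn x hxC y hyC
        have hw' : (ind G (insert s' (insert t' C))).Reachable x y := by
          refine ⟨w.transfer _ ?_⟩
          intro e he
          induction e with
          | h u' v' =>
            have hadj := w.adj_of_mem_edges he
            exact ⟨hadj.1, hCUC _ (hw _ (w.fst_mem_support_of_mem_edges he)),
              hCUC _ (hw _ (w.snd_mem_support_of_mem_edges he))⟩
        have h1 : (ind G (insert s' (insert t' C))).Adj s' x := ⟨hsx, hs'UC, hCUC _ hxC⟩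
        have h2 : (ind G (insert s' (insert t' C))).Adj y t' := ⟨hty.symm, hCUC _ hyC, ht'UC⟩
        exact (h1.reachable).trans (hw'.trans h2.reachable)
      have hdpos := hreach.pos_dist_of_ne hs't'
      have hd1 : (ind G (insert s' (insert t' C))).dist s' t' ≠ 1 := by
        intro h
        exact hnadj' (SimpleGraph.dist_eq_one_iff_adj.mp h).1
      obtain ⟨pw0, hpw0⟩ := hreach.exists_walk_length_eq_dist
      have hpw02 : 2 ≤ pw0.length := by omega
      have hmemUC : ∀ i, pw0.getVert i ∈ insert s' (insert t' C) :=
        fun i => ind_support_mem pw0 hs'UC _ (getVert_mem_support pw0 i)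
      have hedges : ∀ e ∈ pw0.edges, e ∈ G.edgeSet := by
        intro e he
        induction e with
        | h u' v' => exact (pw0.adj_of_mem_edges he).1
      refine ⟨pw0.transfer G hedges, ?_, ?_, ?_, ?_⟩
      · rwa [SimpleGraph.Walk.length_transfer]
      · intro i j hij hj hadjG
        rw [SimpleGraph.Walk.length_transfer] at hj
        rw [getVert_transfer, getVert_transfer] at hadjG
        exact shortest_no_chord pw0 hpw0 hij hj ⟨hadjG, hmemUC i, hmemUC j⟩
      · intro i j hij hj heq
        rw [SimpleGraph.Walk.length_transfer] at hj
        rw [getVert_transfer, getVert_transfer] at heq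
        exact shortest_inj pw0 hpw0 hij hj heq
      · intro i hi hilen
        rw [SimpleGraph.Walk.length_transfer] at hilen
        rw [getVert_transfer]
        have hz := hmemUC i
        rw [Finset.mem_insert, Finset.mem_insert] at hz
        rcases hz with hz | hz | hz
        · exact absurd hz.symm (by
            have := shortest_inj pw0 hpw0 hi (by omega)
            rwa [pw0.getVert_zero] at this)
        · exact absurd hz (by
            have := shortest_inj pw0 hpw0 hilen (le_refl pw0.length)
            rwa [pw0.getVert_length] at this)
        · exact hz
    obtain ⟨pA, hpA2, hpAch, hpAinj, hpAint⟩ :=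
      side A s t hsA htA hst hnadjst (hconn A (Or.inl rfl)) hAU
        (hSnbr s hs).1 (hSnbr t ht).1
    obtain ⟨pB, hpB2, hpBch, hpBinj, hpBint⟩ :=
      side B t s htB hsB hst.symm (fun h => hnadjst h.symm) (hconn B (Or.inr rfl)) hBU
        (hSnbr t ht).2 (hSnbr s hs).2
    exact no_long_cycle hG pA pB hpA2 hpB2 hpAch hpBch hpAinj hpBinj
      (fun i j hi hi' hj hj' heq => hAB _ (hpAint i hi hi') (heq ▸ hpBint j hj hj'))
      (fun i j hi hi' hj hj' hadj => hABnadj _ (hpAint i hi hi') _ (hpBint j hj hj') hadj)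
  -- apply the induction hypothesis on each side
  have side2 : ∀ (C : Finset V) (c0 : V), c0 ∈ C → C ⊆ U →
      (∀ x ∈ C, ∀ y ∈ U, G.Adj x y → y ∈ C) → (C ∪ S).card < N →
      ∃ x ∈ C, SimpIn G W x := by
    intro C c0 hc0 hCU hCclosed hcard
    have hWCS : ∀ u ∈ C, ∀ {z}, z ∈ W → G.Adj u z → z ∈ C ∪ S := by
      intro u hu z hz hadj
      by_cases hzS : z ∈ S
      · exact Finset.mem_union_right _ hzS
      · exact Finset.mem_union_left _ (hCclosed u hu z (Finset.mem_sdiff.mpr ⟨hz, hzS⟩) hadj)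
    rcases IH (C ∪ S).card hcard (C ∪ S) rfl with hclq | ⟨x, hx, y, hy, hxy, hnxy, hsx, hsy⟩
    · refine ⟨c0, hc0, ?_⟩
      intro x hxW y hyW hax hay hxy
      exact hclq (Finset.mem_coe.mpr (hWCS c0 hc0 hxW hax))
        (Finset.mem_coe.mpr (hWCS c0 hc0 hyW hay)) hxy
    · obtain ⟨u, huC, hsu⟩ : ∃ u ∈ C, SimpIn G (C ∪ S) u := by
        rw [Finset.mem_union] at hx hy
        rcases hx with hx | hx
        · exact ⟨x, hx, hsx⟩
        rcases hy with hy | hy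
        · exact ⟨y, hy, hsy⟩
        exact absurd (hSclique x hx y hy hxy) hnxy
      refine ⟨u, huC, ?_⟩
      intro z hzW w hwW haz haw hzw
      exact hsu (hWCS u huC hzW haz) (hWCS u huC hwW haw) haz haw hzw
  have hUW : U ⊆ W := Finset.sdiff_subset
  have hcardA : (A ∪ S).card < N := by
    rw [← hWcard]
    apply Finset.card_lt_card
    constructor
    · intro z hz
      rw [Finset.mem_union] at hz
      rcases hz with hz | hz
      · exact hUW (hAU hz)
      · exact (Finset.mem_sdiff.mp (hSsub hz)).1
    · intro hcon
      have hbin := hcon hb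
      rw [Finset.mem_union] at hbin
      rcases hbin with hbin | hbin
      · exact hAB b hbin hbB
      · exact hbnS hbin
  have hcardB : (B ∪ S).card < N := by
    rw [← hWcard]
    apply Finset.card_lt_card
    constructor
    · intro z hz
      rw [Finset.mem_union] at hz
      rcases hz with hz | hz
      · exact hUW (hBU hz)
      · exact (Finset.mem_sdiff.mp (hSsub hz)).1
    · intro hcon
      have hain := hcon ha
      rw [Finset.mem_union] at hain
      rcases hain with hain | hain
      · exact hAB a haA hain
      · exact hanS hain
  obtain ⟨xA, hxA, hsimpA⟩ := side2 A a haA hAU hAclosed hcardA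
  obtain ⟨xB, hxB, hsimpB⟩ := side2 B b hbB hBU hBclosed hcardB
  refine ⟨xA, hUW (hAU hxA), xB, hUW (hBU hxB), ?_, hABnadj xA hxA xB hxB, hsimpA, hsimpB⟩
  intro h
  exact hAB xA hxA (h ▸ hxB)

end DiracAux

namespace Final
open DiracAux

variable {V : Type} [Fintype V] [DecidableEq V]

lemma simp_exists {G : SimpleGraph V} (hG : IsChordal G) {W : Finset V} (hW : W.Nonempty) :
    ∃ v ∈ W, SimpIn G W v := by
  rcases dirac_aux hG W.card W rfl with hclq | ⟨x, hx, _, _, _, _, hsx, _⟩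
  · obtain ⟨v, hv⟩ := hW
    refine ⟨v, hv, ?_⟩
    intro x hxW y hyW _ _ hxy
    exact hclq (Finset.mem_coe.mpr hxW) (Finset.mem_coe.mpr hyW) hxy
  · exact ⟨x, hx, hsx⟩

lemma elim_list {G : SimpleGraph V} (hG : IsChordal G) :
    ∀ N (W : Finset V), W.card = N →
      ∃ l : List V, l.Nodup ∧ l.toFinset = W ∧
        ∀ (i : ℕ) (h : i < l.length), ∀ x ∈ l.drop (i+1), ∀ y ∈ l.drop (i+1),
          G.Adj (l.get ⟨i, h⟩) x → G.Adj (l.get ⟨i, h⟩) y → x ≠ y → G.Adj x y := by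
  intro N
  induction N using Nat.strong_induction_on with
  | _ N IH =>
  intro W hWcard
  rcases Finset.eq_empty_or_nonempty W with rfl | hW
  · exact ⟨[], by simp⟩
  obtain ⟨v, hv, hsimp⟩ := simp_exists hG hW
  have hcard : (W.erase v).card < N := by
    rw [← hWcard]
    exact Finset.card_erase_lt_of_mem hv
  obtain ⟨l', hnd', htf', hprop'⟩ := IH (W.erase v).card hcard (W.erase v) rfl
  refine ⟨v :: l', ?_, ?_, ?_⟩
  · rw [List.nodup_cons]
    refine ⟨fun h => ?_, hnd'⟩
    rw [← List.mem_toFinset, htf'] at h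
    exact (Finset.mem_erase.mp h).1 rfl
  · rw [List.toFinset_cons, htf', Finset.insert_erase hv]
  · intro i hi x hx y hy hax hay hxy
    cases i with
    | zero =>
      simp only [List.drop_succ_cons, List.drop_zero] at hx hy
      have hxW : x ∈ W := by
        have : x ∈ W.erase v := by rw [← htf']; exact List.mem_toFinset.mpr hx
        exact Finset.mem_of_mem_erase this
      have hyW : y ∈ W := by
        have : y ∈ W.erase v := by rw [← htf']; exact List.mem_toFinset.mpr hy
        exact Finset.mem_of_mem_erase this
      exact hsimp hxW hyW hax hay hxy
    | succ j =>
      simp only [List.drop_succ_cons] at hx hy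
      have hj : j < l'.length := by simpa using hi
      exact hprop' j hj x hx y hy hax hay hxy

end Final

lemma getElem_mem_drop {α : Type} (l : List α) (j m : ℕ) (hj : j < l.length) (hm : m ≤ j) :
    l[j] ∈ l.drop m := by
  have h2 : j - m < (l.drop m).length := by simp; omega
  have : (l.drop m)[j-m]'h2 = l[j] := by rw [List.getElem_drop]; congr 1; omega
  rw [← this]
  exact List.getElem_mem h2


/-- Dirac's theorem: a finite simple graph is chordal if and only if it admits a
simplicial elimination ordering. -/
theorem stmt_2 {V : Type} [Fintype V] [DecidableEq V] (G : SimpleGraph V) :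
    IsChordal G ↔
      ∃ σ : Fin (Fintype.card V) ≃ V, ∀ i : Fin (Fintype.card V),
        G.IsClique ({σ i} ∪ {w : V | G.Adj (σ i) w ∧ i < σ.symm w}) := by
  constructor
  · -- chordal → elimination ordering
    intro hG
    obtain ⟨l, hnd, htf, hprop⟩ := Final.elim_list hG (Finset.univ.card) Finset.univ rfl
    have hmem : ∀ x : V, x ∈ l := by
      intro x
      rw [← List.mem_toFinset, htf]
      exact Finset.mem_univ x
    have hlen : Fintype.card V = l.length := by
      rw [← Finset.card_univ, ← htf, List.toFinset_card_of_nodup hnd]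
    refine ⟨(finCongr hlen).trans (hnd.getEquivOfForallMemList l hmem), ?_⟩
    set σ := (finCongr hlen).trans (hnd.getEquivOfForallMemList l hmem) with hσ
    intro i
    have happ : ∀ j : Fin (Fintype.card V), ∀ (h : (j : ℕ) < l.length), σ j = l[(j : ℕ)] := by
      intro j h
      rfl
    have hilen : (i : ℕ) < l.length := by omega
    have memdrop : ∀ w : V, i < σ.symm w → w ∈ l.drop ((i : ℕ) + 1) := by
      intro w hw
      have hjlen : ((σ.symm w : Fin (Fintype.card V)) : ℕ) < l.length := by omega
      have : σ (σ.symm w) = w := Equiv.apply_symm_apply σ w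
      rw [happ _ hjlen] at this
      rw [← this]
      exact getElem_mem_drop l _ _ hjlen (by exact_mod_cast Nat.succ_le_of_lt hw)
    intro u hu v hv huv
    have hσi : σ i = l.get ⟨(i : ℕ), hilen⟩ := happ i hilen
    rcases hu with hu | hu <;> rcases hv with hv | hv
    · exact absurd (hu.trans hv.symm) huv
    · rw [Set.mem_singleton_iff] at hu
      exact hu ▸ hv.1
    · rw [Set.mem_singleton_iff] at hv
      exact hv ▸ (hu.1).symm
    · obtain ⟨hadj_u, hlt_u⟩ := hu
      obtain ⟨hadj_v, hlt_v⟩ := hv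
      rw [hσi] at hadj_u hadj_v
      exact hprop (i : ℕ) hilen u (memdrop u hlt_u) v (memdrop v hlt_v) hadj_u hadj_v huv
  · -- elimination ordering → chordal
    rintro ⟨σ, hσ⟩ n hn f hf hchar
    haveI : NeZero n := ⟨by omega⟩
    obtain ⟨i₀, -, hmin⟩ := Finset.exists_min_image Finset.univ
      (fun i : ZMod n => (σ.symm (f i)).val) ⟨0, Finset.mem_univ 0⟩
    set k := σ.symm (f i₀) with hk
    have hσk : σ k = f i₀ := Equiv.apply_symm_apply σ _
    have hdvd : ∀ c : ℕ, ((c : ZMod n) = 0) → 0 < c → c < n → False := by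
      intro c hc hcpos hclt
      have h1 := (ZMod.natCast_eq_zero_iff c n).mp hc
      have h2 := Nat.le_of_dvd hcpos h1
      omega
    -- the two cycle-neighbors of f i₀
    have hne_idx : ∀ j : ZMod n, j ≠ i₀ → k < σ.symm (f j) := by
      intro j hj
      have h1 := hmin j (Finset.mem_univ j)
      have h2 : σ.symm (f j) ≠ k := by
        intro h
        refine hj (hf ?_)
        rw [← hσk, ← h]
        exact (Equiv.apply_symm_apply σ (f j)).symm
      exact lt_of_le_of_ne (by exact_mod_cast h1) (Ne.symm h2)
    have hadj_next : G.Adj (f i₀) (f (i₀ + 1)) := (hchar i₀ (i₀ + 1)).mpr (Or.inl rfl)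
    have hadj_prev : G.Adj (f i₀) (f (i₀ - 1)) :=
      (hchar i₀ (i₀ - 1)).mpr (Or.inr (by ring))
    have hnext_ne : i₀ + 1 ≠ i₀ := by
      intro h
      exact hdvd 1 (by linear_combination h) one_pos (by omega)
    have hprev_ne : i₀ - 1 ≠ i₀ := by
      intro h
      exact hdvd 1 (by push_cast; linear_combination -h) one_pos (by omega)
    have hprev_next_ne : i₀ - 1 ≠ i₀ + 1 := by
      intro h
      exact hdvd 2 (by push_cast; linear_combination -h) two_pos (by omega)
    have hmem_next : f (i₀ + 1) ∈ ({σ k} ∪ {w : V | G.Adj (σ k) w ∧ k < σ.symm w} : Set V) :=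
      Or.inr ⟨hσk ▸ hadj_next, hne_idx _ hnext_ne⟩
    have hmem_prev : f (i₀ - 1) ∈ ({σ k} ∪ {w : V | G.Adj (σ k) w ∧ k < σ.symm w} : Set V) :=
      Or.inr ⟨hσk ▸ hadj_prev, hne_idx _ hprev_ne⟩
    have hadj := hσ k hmem_prev hmem_next (fun h => hprev_next_ne (hf h))
    rcases (hchar (i₀ - 1) (i₀ + 1)).mp hadj with h | h
    · exact hdvd 1 (by push_cast; linear_combination h) one_pos (by omega)
    · exact hdvd 3 (by push_cast; linear_combination -h) (by omega) (by omega)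
end

section
/- If G is a chordal graph, then the independence complex of G is shellable. -/
open Finset

variable {V : Type} [Fintype V] [DecidableEq V]

theorem exists_dominated {G : SimpleGraph V} (hG : IsChordal G) {a b : V} (hab : G.Adj a b) :
    ∃ u v, G.Adj u v ∧ ∀ w, G.Adj v w → w = u ∨ G.Adj u w := by
  classical
  set P : List V → Prop := fun L => 2 ≤ L.length ∧ L.Nodup ∧
    ∀ i j (hi : i < L.length) (hj : j < L.length),
      G.Adj L[i] L[j] ↔ (j = i + 1 ∨ i = j + 1) with hPdef
  have hPab : P [a, b] := by
    refine ⟨by simp, by simp [hab.ne], ?_⟩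
    intro i j hi hj
    simp at hi hj
    interval_cases i <;> interval_cases j <;>
      simp [hab, hab.symm, G.irrefl]
  have hbdd : ∀ L, P L → L.length ≤ Fintype.card V := fun L hL => hL.2.1.length_le_card
  have hmaxex : ∃ L, P L ∧ ∀ L', P L' → L'.length ≤ L.length := by
    by_contra h
    push_neg at h
    have hgrow : ∀ k, ∃ L, P L ∧ k ≤ L.length := by
      intro k
      induction k with
      | zero => exact ⟨[a,b], hPab, by omega⟩
      | succ k ih =>
        obtain ⟨L, hL, hk⟩ := ih
        obtain ⟨L', hL', hlen⟩ := h L hL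
        exact ⟨L', hL', by omega⟩
    obtain ⟨L, hL, hk⟩ := hgrow (Fintype.card V + 1)
    have := hbdd L hL
    omega
  obtain ⟨L, hL, hmax⟩ := hmaxex
  obtain ⟨hlen2, hnd, hiff⟩ := hL
  obtain ⟨x0, x1, t, rfl⟩ : ∃ x0 x1 t, L = x0 :: x1 :: t := by
    rcases L with _ | ⟨x0, _ | ⟨x1, t⟩⟩ <;> simp at hlen2
    exact ⟨x0, x1, t, rfl⟩
  have hadj01 : G.Adj x0 x1 := by
    exact (hiff 0 1 (by simp) (by simp)).mpr (Or.inl rfl)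
  refine ⟨x1, x0, hadj01.symm, ?_⟩
  intro w hw
  by_contra hcon
  push_neg at hcon
  obtain ⟨hwne, hwnadj⟩ := hcon
  have hwL : w ∉ (x0 :: x1 :: t) := by
    intro hmem
    obtain ⟨i, hi, hLi⟩ := List.mem_iff_getElem.mp hmem
    have hadj : G.Adj ((x0::x1::t)[0]'(by simp)) ((x0::x1::t)[i]) := by
      simpa [hLi] using hw
    have h2 := (hiff 0 i (by simp) hi).mp hadj
    have hi1 : i = 1 := by omega
    subst hi1
    simp at hLi
    exact hwne hLi.symm
  by_cases hQ : ∃ i, 1 ≤ i ∧ ∃ h : i < (x0::x1::t).length, G.Adj w ((x0::x1::t)[i])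
  · -- take the least such i; build an induced cycle if it is >= 2
    obtain ⟨i0, hi01, hlt, hadji0, hmin⟩ :
        ∃ i0, 1 ≤ i0 ∧ ∃ h : i0 < (x0::x1::t).length, G.Adj w ((x0::x1::t)[i0]) ∧
          ∀ j, j < i0 → 1 ≤ j → ∀ h' : j < (x0::x1::t).length, ¬ G.Adj w ((x0::x1::t)[j]) := by
      refine ⟨Nat.find hQ, (Nat.find_spec hQ).1, (Nat.find_spec hQ).2.1,
        (Nat.find_spec hQ).2.2, ?_⟩
      intro j hj h1 h2 hadj
      exact Nat.find_min hQ hj ⟨h1, h2, hadj⟩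
    have hi0ne1 : i0 ≠ 1 := by
      intro h
      subst h
      simp at hadji0
      exact hwnadj hadji0.symm
    have hi02 : 2 ≤ i0 := by omega
    have hlt' : i0 < t.length + 2 := by simp at hlt; omega
    set n := i0 + 2 with hndef
    set C := w :: (x0::x1::t).take (i0+1) with hCdef
    have hlenC : C.length = n := by
      show (w :: (x0::x1::t).take (i0+1)).length = n
      simp [List.length_take]
      omega
    have hndC : C.Nodup := by
      show (w :: (x0::x1::t).take (i0+1)).Nodup
      rw [List.nodup_cons]
      exact ⟨fun hm => hwL (List.mem_of_mem_take hm), hnd.sublist (List.take_sublist _ _)⟩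
    have hCS : ∀ j (h : j + 1 < C.length), C[j+1] = (x0::x1::t)[j]'(by rw [hlenC] at h; simp; omega) := by
      intro j h
      show (w :: (x0::x1::t).take (i0+1))[j+1]'h = _
      rw [List.getElem_cons_succ]
      exact List.getElem_take
    have hC0 : ∀ h : 0 < C.length, C[0] = w := fun _ => rfl
    have hKey : ∀ p q (hp : p < n) (hq : q < n),
        G.Adj (C[p]'(by rw [hlenC]; omega)) (C[q]'(by rw [hlenC]; omega)) ↔
          (q = p + 1 ∨ p = q + 1 ∨ (p = 0 ∧ q = n - 1) ∨ (q = 0 ∧ p = n - 1)) := by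
      intro p q hp hq
      rcases p with _ | p <;> rcases q with _ | q
      · rw [hC0]
        simp [G.irrefl]; omega
      · rw [hC0, hCS q (by rw [hlenC]; omega)]
        constructor
        · intro hadj
          have hq0 : q = 0 ∨ q = i0 := by
            by_contra hb
            push_neg at hb
            exact hmin q (by omega) (by omega) (by simp; omega) hadj
          omega
        · intro h
          have hq0 : q = 0 ∨ q = i0 := by omega
          rcases hq0 with h0 | h0 <;> subst h0
          · simpa using hw.symm
          · exact hadji0
      · rw [hC0, hCS p (by rw [hlenC]; omega)]
        rw [G.adj_comm]
        constructor
        · intro hadj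
          have hp0 : p = 0 ∨ p = i0 := by
            by_contra hb
            push_neg at hb
            exact hmin p (by omega) (by omega) (by simp; omega) hadj
          omega
        · intro h
          have hp0 : p = 0 ∨ p = i0 := by omega
          rcases hp0 with h0 | h0 <;> subst h0
          · simpa using hw.symm
          · exact hadji0
      · rw [hCS p (by rw [hlenC]; omega), hCS q (by rw [hlenC]; omega)]
        rw [hiff p q (by simp; omega) (by simp; omega)]
        omega
    haveI : NeZero n := ⟨by omega⟩
    haveI : Fact (1 < n) := ⟨by omega⟩
    have hbridge : ∀ x y : ZMod n, y = x + 1 ↔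
        (y.val = x.val + 1 ∨ (x.val = n - 1 ∧ y.val = 0)) := by
      intro x y
      have h1 : (x + 1).val = (x.val + 1) % n := by rw [ZMod.val_add, ZMod.val_one]
      have hxlt := ZMod.val_lt x
      have hylt := ZMod.val_lt y
      constructor
      · rintro rfl
        rcases eq_or_ne x.val (n-1) with h | h
        · right
          refine ⟨h, ?_⟩
          rw [h1, h, show n - 1 + 1 = n by omega, Nat.mod_self]
        · left
          rw [h1, Nat.mod_eq_of_lt (by omega)]
      · intro h
        apply ZMod.val_injective
        rw [h1]
        rcases h with h | ⟨ha, hb⟩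
        · rw [Nat.mod_eq_of_lt (by omega), h]
        · rw [ha, show n - 1 + 1 = n by omega, Nat.mod_self, hb]
    set f : ZMod n → V := fun x => C[x.val]'(by rw [hlenC]; exact ZMod.val_lt x) with hfdef
    have finj : Function.Injective f := by
      intro x y h
      apply ZMod.val_injective
      exact (List.Nodup.getElem_inj_iff hndC).mp h
    apply hG n (by omega) f finj
    intro x y
    have hk := hKey x.val y.val (ZMod.val_lt x) (ZMod.val_lt y)
    constructor
    · intro h
      rcases hk.mp h with h | h | ⟨h1, h2⟩ | ⟨h1, h2⟩
      · exact Or.inl ((hbridge x y).mpr (Or.inl h))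
      · exact Or.inr ((hbridge y x).mpr (Or.inl h))
      · exact Or.inr ((hbridge y x).mpr (Or.inr ⟨h2, h1⟩))
      · exact Or.inl ((hbridge x y).mpr (Or.inr ⟨h2, h1⟩))
    · intro h
      apply hk.mpr
      rcases h with h | h
      · rcases (hbridge x y).mp h with h' | ⟨h1, h2⟩
        · exact Or.inl h'
        · exact Or.inr (Or.inr (Or.inr ⟨h2, h1⟩))
      · rcases (hbridge y x).mp h with h' | ⟨h1, h2⟩
        · exact Or.inr (Or.inl h')
        · exact Or.inr (Or.inr (Or.inl ⟨h2, h1⟩))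
  · -- no neighbor of w beyond index 0 : extend the path, contradiction
    push_neg at hQ
    have hPw : P (w :: x0 :: x1 :: t) := by
      refine ⟨by simp, by rw [List.nodup_cons]; exact ⟨hwL, hnd⟩, ?_⟩
      intro i j hi hj
      rcases i with _ | i <;> rcases j with _ | j
      · simp [G.irrefl]
      · simp only [List.getElem_cons_zero, List.getElem_cons_succ]
        constructor
        · intro hadj
          have hj0 : j = 0 := by
            by_contra hne
            exact hQ j (by omega) (by simpa using hj) hadj
          omega
        · intro h
          have hj0 : j = 0 := by omega
          subst hj0
          simpa using hw.symm
      · simp only [List.getElem_cons_zero, List.getElem_cons_succ]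
        constructor
        · intro hadj
          have hi0 : i = 0 := by
            by_contra hne
            exact hQ i (by omega) (by simpa using hi) hadj.symm
          omega
        · intro h
          have hi0 : i = 0 := by omega
          subst hi0
          simpa using hw
      · simp only [List.getElem_cons_succ]
        rw [hiff i j (by simpa using hi) (by simpa using hj)]
        omega
    have := hmax _ hPw
    simp at this

section AuxShell

variable {V : Type} [Fintype V] [DecidableEq V] {G : SimpleGraph V} {u v : V}

lemma del_adj {A : Finset V} {x y : V} :
    (deleteVerts G A).Adj x y ↔ G.Adj x y ∧ x ∉ A ∧ y ∉ A := Iff.rfl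

open Classical in
noncomputable def cnbhd' (G : SimpleGraph V) (u : V) : Finset V :=
  Finset.univ.filter fun w => w = u ∨ G.Adj u w

lemma mem_cnbhd' {x : V} : x ∈ cnbhd' G u ↔ x = u ∨ G.Adj u x := by
  simp [cnbhd']

lemma indep_subset {S T : Finset V} (h : IsIndepSet G T) (hsub : S ⊆ T) :
    IsIndepSet G S := fun _ hx _ hy => h (hsub hx) (hsub hy)

lemma insert_indep {S : Finset V} {z : V} (hS : IsIndepSet G S)
    (hz : ∀ s ∈ S, ¬ G.Adj z s) : IsIndepSet G (insert z S) := by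
  intro x hx y hy hadj
  rcases Finset.mem_insert.mp hx with hxz | hx
  · rcases Finset.mem_insert.mp hy with hyz | hy
    · exact G.irrefl (hxz ▸ hyz ▸ hadj)
    · exact hz y hy (hxz ▸ hadj)
  · rcases Finset.mem_insert.mp hy with hyz | hy
    · exact hz x hx (hyz ▸ hadj).symm
    · exact hS hx hy hadj

lemma chordal_deleteVerts (hG : IsChordal G) (A : Finset V) :
    IsChordal (deleteVerts G A) := by
  intro n hn f hf hcyc
  apply hG n hn f hf
  have hnotA : ∀ i : ZMod n, f i ∉ A := by
    intro i
    have := (hcyc i (i + 1)).mpr (Or.inl rfl)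
    exact this.2.1
  intro i j
  rw [← hcyc i j]
  constructor
  · intro h
    exact ⟨h, hnotA i, hnotA j⟩
  · exact fun h => h.1

lemma maxIndep_del_iff (A S : Finset V) :
    IsMaxIndepSet (deleteVerts G A) S ↔
      (∀ a ∈ A, a ∈ S) ∧ IsIndepSet G (S \ A) ∧
        ∀ w, w ∉ A → w ∉ S → ¬ IsIndepSet G (insert w (S \ A)) := by
  constructor
  · rintro ⟨hind, hmaxi⟩
    have hA : ∀ a ∈ A, a ∈ S := by
      intro a ha
      by_contra haS
      have hins : IsIndepSet (deleteVerts G A) (insert a S) := by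
        intro x hx y hy hadj
        rcases Finset.mem_insert.mp hx with rfl | hx
        · exact hadj.2.1 ha
        · rcases Finset.mem_insert.mp hy with rfl | hy
          · exact hadj.2.2 ha
          · exact hind hx hy hadj
      have := hmaxi _ hins (Finset.subset_insert _ _)
      exact haS (this ▸ Finset.mem_insert_self a S)
    refine ⟨hA, ?_, ?_⟩
    · intro x hx y hy hadj
      rw [Finset.mem_sdiff] at hx hy
      exact hind hx.1 hy.1 ⟨hadj, hx.2, hy.2⟩
    · intro w hwA hwS hind'
      have hins : IsIndepSet (deleteVerts G A) (insert w S) := by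
        intro x hx y hy hadj
        have hx' : x ∈ insert w (S \ A) := by
          rcases Finset.mem_insert.mp hx with rfl | hx
          · exact Finset.mem_insert_self _ _
          · exact Finset.mem_insert_of_mem (Finset.mem_sdiff.mpr ⟨hx, hadj.2.1⟩)
        have hy' : y ∈ insert w (S \ A) := by
          rcases Finset.mem_insert.mp hy with rfl | hy
          · exact Finset.mem_insert_self _ _
          · exact Finset.mem_insert_of_mem (Finset.mem_sdiff.mpr ⟨hy, hadj.2.2⟩)
        exact hind' hx' hy' hadj.1
      have := hmaxi _ hins (Finset.subset_insert _ _)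
      exact hwS (this ▸ Finset.mem_insert_self w S)
  · rintro ⟨hA, hind, hmaxf⟩
    constructor
    · intro x hx y hy hadj
      exact hind (Finset.mem_sdiff.mpr ⟨hx, hadj.2.1⟩)
        (Finset.mem_sdiff.mpr ⟨hy, hadj.2.2⟩) hadj.1
    · intro T hT hsub
      refine Finset.Subset.antisymm hsub ?_
      intro w hwT
      by_contra hwS
      have hwA : w ∉ A := fun h => hwS (hA w h)
      apply hmaxf w hwA hwS
      intro x hx y hy hadj
      have hxA : x ∉ A := by
        rcases Finset.mem_insert.mp hx with rfl | hx
        · exact hwA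
        · exact (Finset.mem_sdiff.mp hx).2
      have hyA : y ∉ A := by
        rcases Finset.mem_insert.mp hy with rfl | hy
        · exact hwA
        · exact (Finset.mem_sdiff.mp hy).2
      have hxT : x ∈ T := by
        rcases Finset.mem_insert.mp hx with rfl | hx
        · exact hwT
        · exact hsub (Finset.mem_sdiff.mp hx).1
      have hyT : y ∈ T := by
        rcases Finset.mem_insert.mp hy with rfl | hy
        · exact hwT
        · exact hsub (Finset.mem_sdiff.mp hy).1
      exact hT hxT hyT ⟨hadj, hxA, hyA⟩

lemma maxF_to_del (A T : Finset V) (hT : IsIndepSet G T) (hdisj : ∀ a ∈ A, a ∉ T)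
    (hmax : ∀ w, w ∉ A → w ∉ T → ¬ IsIndepSet G (insert w T)) :
    IsMaxIndepSet (deleteVerts G A) (T ∪ A) := by
  have hTA : (T ∪ A) \ A = T := by
    ext x
    simp only [Finset.mem_sdiff, Finset.mem_union]
    constructor
    · rintro ⟨h1 | h1, h2⟩
      · exact h1
      · exact absurd h1 h2
    · intro h
      exact ⟨Or.inl h, fun ha => hdisj x ha h⟩
  rw [maxIndep_del_iff, hTA]
  refine ⟨fun a ha => Finset.mem_union_right _ ha, hT, ?_⟩
  intro w hwA hwTA
  exact hmax w hwA (fun h => hwTA (Finset.mem_union_left _ h))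

section Dom
variable (huv : G.Adj u v) (hdom : ∀ w, G.Adj v w → w = u ∨ G.Adj u w)
include huv hdom

/-- shedding: a maximal `u`-free independent set is maximal. -/
lemma maxfree_u_iff (T : Finset V) (hu : u ∉ T) :
    (IsIndepSet G T ∧ ∀ w, w ≠ u → w ∉ T → ¬ IsIndepSet G (insert w T)) ↔
      IsMaxIndepSet G T := by
  constructor
  · rintro ⟨hT, hmax⟩
    have hex : ∃ t ∈ T, G.Adj u t := by
      by_contra hnone
      push_neg at hnone
      have hvT : v ∉ T := fun h => hnone v h huv
      apply hmax v huv.ne' hvT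
      apply insert_indep hT
      intro s hs hadj
      rcases hdom s hadj with h | h
      · exact hu (h ▸ hs)
      · exact hnone s hs h
    refine ⟨hT, ?_⟩
    intro T' hT' hsub
    refine Finset.Subset.antisymm hsub ?_
    intro w hwT'
    by_contra hwT
    rcases eq_or_ne w u with rfl | hwu
    · obtain ⟨t, htT, hadj⟩ := hex
      exact hT' hwT' (hsub htT) hadj
    · exact hmax w hwu hwT (indep_subset hT' (Finset.insert_subset hwT' hsub))
  · rintro ⟨hT, hmaxi⟩
    refine ⟨hT, ?_⟩
    intro w _ hwT hind
    have := hmaxi _ hind (Finset.subset_insert _ _)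
    exact hwT (this ▸ Finset.mem_insert_self w T)
end Dom

lemma maxfree_cn_iff (T : Finset V) (hdisj : ∀ a ∈ cnbhd' G u, a ∉ T) :
    (IsIndepSet G T ∧ ∀ w, w ∉ cnbhd' G u → w ∉ T → ¬ IsIndepSet G (insert w T)) ↔
      IsMaxIndepSet G (insert u T) := by
  have huT : u ∉ T := hdisj u (mem_cnbhd'.mpr (Or.inl rfl))
  constructor
  · rintro ⟨hT, hmax⟩
    have hind : IsIndepSet G (insert u T) := by
      apply insert_indep hT
      intro s hs hadj
      exact hdisj s (mem_cnbhd'.mpr (Or.inr hadj)) hs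
    refine ⟨hind, ?_⟩
    intro T' hT' hsub
    refine Finset.Subset.antisymm hsub ?_
    intro w hwT'
    by_contra hwS
    have hwu : w ≠ u := fun h => hwS (h ▸ Finset.mem_insert_self u T)
    have hwT : w ∉ T := fun h => hwS (Finset.mem_insert_of_mem h)
    have hwcn : w ∉ cnbhd' G u := by
      intro hcn
      rcases mem_cnbhd'.mp hcn with h | hadj
      · exact hwu h
      · exact hT' (hsub (Finset.mem_insert_self u T)) hwT' hadj
    apply hmax w hwcn hwT
    refine indep_subset hT' ?_
    intro x hx
    rcases Finset.mem_insert.mp hx with hxw | hx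
    · exact hxw ▸ hwT'
    · exact hsub (Finset.mem_insert_of_mem hx)
  · rintro ⟨hind, hmaxi⟩
    refine ⟨indep_subset hind (Finset.subset_insert _ _), ?_⟩
    intro w hwcn hwT hindw
    have hwu : w ≠ u := fun h => hwcn (h ▸ mem_cnbhd'.mpr (Or.inl rfl))
    have h2 : IsIndepSet G (insert w (insert u T)) := by
      apply insert_indep hind
      intro s hs hadj
      rcases Finset.mem_insert.mp hs with h | h
      · exact hwcn (mem_cnbhd'.mpr (Or.inr (h ▸ hadj).symm))
      · exact hindw (Finset.mem_insert_self w T) (Finset.mem_insert_of_mem h) hadj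
    have := hmaxi _ h2 (Finset.subset_insert _ _)
    have hw : w ∈ insert u T := this ▸ Finset.mem_insert_self w (insert u T)
    rcases Finset.mem_insert.mp hw with h | hw
    · exact hwu h
    · exact hwT hw

lemma exists_maxfree (T : Finset V) (hT : IsIndepSet G T) (hu : u ∉ T) :
    ∃ T', T ⊆ T' ∧ u ∉ T' ∧ IsIndepSet G T' ∧
      ∀ w, w ≠ u → w ∉ T' → ¬ IsIndepSet G (insert w T') := by
  classical
  set s : Finset (Finset V) :=
    Finset.univ.filter (fun W => T ⊆ W ∧ u ∉ W ∧ IsIndepSet G W) with hs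
  have hTs : T ∈ s := by simp [hs, hu, hT]
  obtain ⟨T', hT's, hmax⟩ : ∃ T' ∈ s, ∀ x ∈ s, ¬ T' < x := by
    obtain ⟨T', hT', hm⟩ := Finset.exists_maximal (s := s) ⟨T, hTs⟩
    exact ⟨T', hT', fun x hx hlt => hlt.2 (hm hx hlt.1)⟩
  simp only [hs, Finset.mem_filter, Finset.mem_univ, true_and] at hT's
  refine ⟨T', hT's.1, hT's.2.1, hT's.2.2, ?_⟩
  intro w hwu hwT' hind
  apply hmax (insert w T')
  · simp only [hs, Finset.mem_filter, Finset.mem_univ, true_and]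
    exact ⟨hT's.1.trans (Finset.subset_insert _ _),
      fun h => (Finset.mem_insert.mp h).elim (fun h' => hwu h'.symm) hT's.2.1, hind⟩
  · exact Finset.ssubset_insert hwT'

lemma edge_ncard_lt (A : Finset V) (x y : V) (hx : x ∈ A) (hxy : G.Adj x y) :
    (deleteVerts G A).edgeSet.ncard < G.edgeSet.ncard := by
  apply Set.ncard_lt_ncard
  · constructor
    · exact SimpleGraph.edgeSet_mono (fun a b h => h.1)
    · intro hsub
      have : s(x, y) ∈ (deleteVerts G A).edgeSet := hsub ((SimpleGraph.mem_edgeSet G).mpr hxy)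
      exact ((SimpleGraph.mem_edgeSet _).mp this).2.1 hx
  · exact Set.toFinite _

end AuxShell

theorem shellable_aux : ∀ (N : ℕ) (G : SimpleGraph V), IsChordal G → G.edgeSet.ncard = N →
    ∃ (k : ℕ) (F : Fin k → Finset V),
      Function.Injective F ∧ (∀ S : Finset V, IsMaxIndepSet G S ↔ ∃ i, F i = S) ∧
      ∀ i j : Fin k, i < j →
        ∃ u ∈ F j \ F i, ∃ ℓ : Fin k, ℓ < j ∧ F j \ F ℓ = {u} := by
  intro N
  induction N using Nat.strong_induction_on with
  | _ N ih =>
  intro G hG hcard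
  by_cases hE : ∃ a b, G.Adj a b
  case neg =>
    push_neg at hE
    refine ⟨1, fun _ => Finset.univ, fun a b _ => Subsingleton.elim a b, ?_, ?_⟩
    · intro S
      constructor
      · intro hS
        exact ⟨0, (hS.2 Finset.univ (fun x _ y _ hadj => hE x y hadj)
          (Finset.subset_univ S)).symm⟩
      · rintro ⟨i, rfl⟩
        exact ⟨fun x _ y _ hadj => hE x y hadj,
          fun T _ hsub => (Finset.univ_subset_iff.mp hsub).symm⟩
    · intro i j hij
      have h := Subsingleton.elim i j
      subst h
      exact absurd hij (lt_irrefl _)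
  case pos =>
  obtain ⟨a, b, hab⟩ := hE
  obtain ⟨u, v, huv, hdom⟩ := exists_dominated hG hab
  have hucn : u ∈ cnbhd' G u := mem_cnbhd'.mpr (Or.inl rfl)
  have hG1 : IsChordal (deleteVerts G {u}) := chordal_deleteVerts hG _
  have hG2 : IsChordal (deleteVerts G (cnbhd' G u)) := chordal_deleteVerts hG _
  have hn1 : (deleteVerts G {u}).edgeSet.ncard < N :=
    hcard ▸ edge_ncard_lt {u} u v (Finset.mem_singleton_self u) huv
  have hn2 : (deleteVerts G (cnbhd' G u)).edgeSet.ncard < N :=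
    hcard ▸ edge_ncard_lt _ u v hucn huv
  obtain ⟨k1, F1, hF1inj, hF1iff, hF1shell⟩ := ih _ hn1 _ hG1 rfl
  obtain ⟨k2, F2, hF2inj, hF2iff, hF2shell⟩ := ih _ hn2 _ hG2 rfl
  -- facts about block 1
  have hblock1 : ∀ i : Fin k1, u ∈ F1 i ∧ IsMaxIndepSet G ((F1 i).erase u) := by
    intro i
    have h := (maxIndep_del_iff {u} (F1 i)).mp ((hF1iff _).mpr ⟨i, rfl⟩)
    have hu1 : u ∈ F1 i := h.1 u (Finset.mem_singleton_self u)
    have he : F1 i \ {u} = (F1 i).erase u := Finset.sdiff_singleton_eq_erase u (F1 i)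
    rw [he] at h
    refine ⟨hu1, (maxfree_u_iff huv hdom _ (Finset.notMem_erase u _)).mp ⟨h.2.1, ?_⟩⟩
    intro w hwne hwT
    exact h.2.2 w (by simp [hwne]) (fun hwF => hwT (Finset.mem_erase.mpr ⟨hwne, hwF⟩))
  -- facts about block 2
  have hblock2 : ∀ j : Fin k2, (∀ a ∈ cnbhd' G u, a ∈ F2 j) ∧
      IsMaxIndepSet G (insert u (F2 j \ cnbhd' G u)) ∧
      IsIndepSet G (F2 j \ cnbhd' G u) := by
    intro j
    have h := (maxIndep_del_iff _ (F2 j)).mp ((hF2iff _).mpr ⟨j, rfl⟩)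
    have hdisj : ∀ a ∈ cnbhd' G u, a ∉ F2 j \ cnbhd' G u :=
      fun a ha hmem => (Finset.mem_sdiff.mp hmem).2 ha
    refine ⟨h.1, (maxfree_cn_iff _ hdisj).mp ⟨h.2.1, ?_⟩, h.2.1⟩
    intro w hwcn hwT
    refine h.2.2 w hwcn ?_
    intro hwF
    exact hwT (Finset.mem_sdiff.mpr ⟨hwF, hwcn⟩)
  set K := k1 + k2 with hK
  set F : Fin (k1 + k2) → Finset V := fun i =>
    if h : (i : ℕ) < k1 then (F1 ⟨i, h⟩).erase u
    else insert u (F2 ⟨(i : ℕ) - k1, by have := i.isLt; omega⟩ \ cnbhd' G u) with hFdef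
  have hF1' : ∀ (p : Fin (k1 + k2)) (hp : (p : ℕ) < k1) (q : Fin k1),
      (q : ℕ) = (p : ℕ) → F p = (F1 q).erase u := by
    intro p hp q hq
    simp only [hFdef]
    rw [dif_pos hp]
    congr 1
    exact congrArg F1 (Fin.ext hq.symm)
  have hF2' : ∀ (p : Fin (k1 + k2)) (hp : ¬ (p : ℕ) < k1) (q : Fin k2),
      (q : ℕ) = (p : ℕ) - k1 → F p = insert u (F2 q \ cnbhd' G u) := by
    intro p hp q hq
    simp only [hFdef]
    rw [dif_neg hp]
    congr 2
    exact congrArg F2 (Fin.ext hq.symm)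
  have huF1 : ∀ (p : Fin (k1 + k2)) (hp : (p : ℕ) < k1), u ∉ F p := by
    intro p hp
    rw [hF1' p hp ⟨p, hp⟩ rfl]
    exact Finset.notMem_erase u _
  have huF2 : ∀ (p : Fin (k1 + k2)) (hp : ¬ (p : ℕ) < k1), u ∈ F p := by
    intro p hp
    rw [hF2' p hp ⟨(p : ℕ) - k1, by have := p.isLt; omega⟩ rfl]
    exact Finset.mem_insert_self u _
  -- recovery maps
  have hrec1 : ∀ i : Fin k1, insert u ((F1 i).erase u) = F1 i :=
    fun i => Finset.insert_erase (hblock1 i).1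
  have hrec2 : ∀ j : Fin k2, (insert u (F2 j \ cnbhd' G u)).erase u ∪ cnbhd' G u = F2 j := by
    intro j
    ext x
    simp only [Finset.mem_union, Finset.mem_erase, Finset.mem_insert, Finset.mem_sdiff]
    constructor
    · rintro (⟨hxu, hx | hx⟩ | hx)
      · exact absurd hx hxu
      · exact hx.1
      · exact (hblock2 j).1 x hx
    · intro hxM
      by_cases hxc : x ∈ cnbhd' G u
      · exact Or.inr hxc
      · exact Or.inl ⟨fun h => hxc (h ▸ hucn), Or.inr ⟨hxM, hxc⟩⟩
  -- sdiff transfer identities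
  have hsd1 : ∀ A B : Finset V, u ∈ B → A.erase u \ B.erase u = A \ B := by
    intro A B hB
    ext x
    by_cases hxu : x = u
    · subst hxu
      simp [hB]
    · simp only [Finset.mem_sdiff, Finset.mem_erase, hxu]
      tauto
  have hsd2 : ∀ A B : Finset V, (∀ a ∈ cnbhd' G u, a ∈ B) →
      (insert u (A \ cnbhd' G u)) \ (insert u (B \ cnbhd' G u)) = A \ B := by
    intro A B hB
    have huB : u ∈ B := hB u hucn
    ext x
    by_cases hxu : x = u
    · subst hxu
      simp [huB]
    · by_cases hxc : x ∈ cnbhd' G u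
      · simp only [Finset.mem_sdiff, Finset.mem_insert, hxu, hxc]
        have := hB x hxc
        tauto
      · simp only [Finset.mem_sdiff, Finset.mem_insert, hxu, hxc]
        tauto
  refine ⟨k1 + k2, F, ?_, ?_, ?_⟩
  -- injectivity
  · intro i j hij
    by_cases hi : (i : ℕ) < k1 <;> by_cases hj : (j : ℕ) < k1
    · rw [hF1' i hi ⟨i, hi⟩ rfl, hF1' j hj ⟨j, hj⟩ rfl] at hij
      have h2 : F1 ⟨i, hi⟩ = F1 ⟨j, hj⟩ := by
        rw [← hrec1 ⟨i, hi⟩, ← hrec1 ⟨j, hj⟩, hij]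
      have := congrArg Fin.val (hF1inj h2)
      exact Fin.ext this
    · exact absurd (hij ▸ huF2 j hj) (huF1 i hi)
    · exact absurd (hij.symm ▸ huF2 i hi) (huF1 j hj)
    · have hi2lt : (i : ℕ) - k1 < k2 := by have := i.isLt; omega
      have hj2lt : (j : ℕ) - k1 < k2 := by have := j.isLt; omega
      rw [hF2' i hi ⟨_, hi2lt⟩ rfl, hF2' j hj ⟨_, hj2lt⟩ rfl] at hij
      have h2 : F2 ⟨_, hi2lt⟩ = F2 ⟨_, hj2lt⟩ := by
        rw [← hrec2 ⟨_, hi2lt⟩, ← hrec2 ⟨_, hj2lt⟩, hij]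
      have hval := congrArg Fin.val (hF2inj h2)
      simp only at hval
      exact Fin.ext (by omega)
  -- completeness
  · intro S
    constructor
    · intro hS
      by_cases hu : u ∈ S
      · set T := S.erase u with hT
        have hdisj : ∀ a ∈ cnbhd' G u, a ∉ T := by
          intro a ha hmem
          rcases mem_cnbhd'.mp ha with h | h
          · exact (Finset.mem_erase.mp hmem).1 h
          · exact hS.1 hu (Finset.mem_of_mem_erase hmem) h
        have hins : insert u T = S := Finset.insert_erase hu
        obtain ⟨hTind, hTmax⟩ := (maxfree_cn_iff T hdisj).mpr (by rw [hins]; exact hS)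
        have hM2 : IsMaxIndepSet (deleteVerts G (cnbhd' G u)) (T ∪ cnbhd' G u) :=
          maxF_to_del _ _ hTind hdisj hTmax
        obtain ⟨j, hj⟩ := (hF2iff _).mp hM2
        refine ⟨⟨k1 + (j : ℕ), by have := j.isLt; omega⟩, ?_⟩
        rw [hF2' _ (by simp only [Fin.val_mk]; omega) j (by simp only [Fin.val_mk]; omega)]
        rw [hj]
        have hTc : (T ∪ cnbhd' G u) \ cnbhd' G u = T := by
          ext x
          simp only [Finset.mem_sdiff, Finset.mem_union]
          constructor
          · rintro ⟨h1 | h1, h2⟩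
            · exact h1
            · exact absurd h1 h2
          · exact fun h => ⟨Or.inl h, fun hc => hdisj x hc h⟩
        rw [hTc, hins]
      · obtain ⟨hSind, hSmax⟩ := (maxfree_u_iff huv hdom S hu).mpr hS
        have hM1 : IsMaxIndepSet (deleteVerts G {u}) (S ∪ {u}) := by
          refine maxF_to_del {u} S hSind ?_ ?_
          · intro a ha haS
            rw [Finset.mem_singleton] at ha
            exact hu (ha ▸ haS)
          · intro w hw hwS
            exact hSmax w (by simpa using hw) hwS
        obtain ⟨i, hi⟩ := (hF1iff _).mp hM1
        refine ⟨⟨(i : ℕ), by have := i.isLt; omega⟩, ?_⟩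
        rw [hF1' _ (by simpa using i.isLt) i rfl, hi]
        ext x
        simp only [Finset.mem_erase, Finset.mem_union, Finset.mem_singleton]
        constructor
        · rintro ⟨h1, h2 | h2⟩
          · exact h2
          · exact absurd h2 h1
        · exact fun h => ⟨fun h' => hu (h' ▸ h), Or.inl h⟩
    · rintro ⟨i, rfl⟩
      by_cases hi : (i : ℕ) < k1
      · rw [hF1' i hi ⟨i, hi⟩ rfl]
        exact (hblock1 ⟨i, hi⟩).2
      · rw [hF2' i hi ⟨(i : ℕ) - k1, by have := i.isLt; omega⟩ rfl]
        exact (hblock2 _).2.1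
  -- the shelling condition
  · intro i j hij
    have hijn : (i : ℕ) < (j : ℕ) := Fin.lt_def.mp hij
    by_cases hj : (j : ℕ) < k1
    · have hi : (i : ℕ) < k1 := by omega
      obtain ⟨w, hw, ℓ, hℓlt, hdiff⟩ := hF1shell ⟨i, hi⟩ ⟨j, hj⟩ (Fin.lt_def.mpr hijn)
      have hℓn : (ℓ : ℕ) < (j : ℕ) := Fin.lt_def.mp hℓlt
      refine ⟨w, ?_, ⟨(ℓ : ℕ), by have := ℓ.isLt; omega⟩, Fin.lt_def.mpr hℓn, ?_⟩
      · rw [hF1' j hj ⟨j, hj⟩ rfl, hF1' i hi ⟨i, hi⟩ rfl,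
          hsd1 _ _ (hblock1 ⟨i, hi⟩).1]
        exact hw
      · rw [hF1' j hj ⟨j, hj⟩ rfl, hF1' _ (by simpa using ℓ.isLt) ℓ rfl,
          hsd1 _ _ (hblock1 ℓ).1]
        exact hdiff
    by_cases hi : (i : ℕ) < k1
    · -- the crossing case: the shedding vertex
      have hj2lt : (j : ℕ) - k1 < k2 := by have := j.isLt; omega
      have hFj : F j = insert u (F2 ⟨_, hj2lt⟩ \ cnbhd' G u) := hF2' j hj ⟨_, hj2lt⟩ rfl
      set T := F2 ⟨_, hj2lt⟩ \ cnbhd' G u with hT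
      have hTind : IsIndepSet G T := (hblock2 _).2.2
      have huT : u ∉ T := fun h => (Finset.mem_sdiff.mp h).2 hucn
      obtain ⟨T', hsub, huT', hT'ind, hT'max⟩ := exists_maxfree T hTind huT
      have hM1 : IsMaxIndepSet (deleteVerts G {u}) (T' ∪ {u}) := by
        refine maxF_to_del {u} T' hT'ind ?_ ?_
        · intro a ha haT
          rw [Finset.mem_singleton] at ha
          exact huT' (ha ▸ haT)
        · intro w hw hwT
          exact hT'max w (by simpa using hw) hwT
      obtain ⟨ℓ1, hℓ1⟩ := (hF1iff _).mp hM1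
      have hFℓ : F ⟨(ℓ1 : ℕ), by have := ℓ1.isLt; omega⟩ = T' := by
        rw [hF1' _ (by simpa using ℓ1.isLt) ℓ1 rfl, hℓ1]
        ext x
        simp only [Finset.mem_erase, Finset.mem_union, Finset.mem_singleton]
        constructor
        · rintro ⟨h1, h2 | h2⟩
          · exact h2
          · exact absurd h2 h1
        · exact fun h => ⟨fun h' => huT' (h' ▸ h), Or.inl h⟩
      refine ⟨u, ?_, ⟨(ℓ1 : ℕ), by have := ℓ1.isLt; omega⟩,
        Fin.lt_def.mpr (show (ℓ1 : ℕ) < (j : ℕ) by have := ℓ1.isLt; omega), ?_⟩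
      · rw [hFj, hF1' i hi ⟨i, hi⟩ rfl]
        exact Finset.mem_sdiff.mpr ⟨Finset.mem_insert_self u _, Finset.notMem_erase u _⟩
      · rw [hFj, hFℓ]
        ext x
        simp only [Finset.mem_sdiff, Finset.mem_insert, Finset.mem_singleton]
        constructor
        · rintro ⟨h1 | h1, h2⟩
          · exact h1
          · exact absurd (hsub h1) h2
        · rintro rfl
          exact ⟨Or.inl rfl, huT'⟩
    · -- both in block 2
      have hi2lt : (i : ℕ) - k1 < k2 := by have := i.isLt; omega
      have hj2lt : (j : ℕ) - k1 < k2 := by have := j.isLt; omega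
      obtain ⟨w, hw, ℓ, hℓlt, hdiff⟩ := hF2shell ⟨_, hi2lt⟩ ⟨_, hj2lt⟩
        (Fin.lt_def.mpr (by simp only [Fin.val_mk]; omega))
      have hℓn : (ℓ : ℕ) < (j : ℕ) - k1 := Fin.lt_def.mp hℓlt
      refine ⟨w, ?_, ⟨k1 + (ℓ : ℕ), by have := j.isLt; omega⟩,
        Fin.lt_def.mpr (by simp only [Fin.val_mk]; omega), ?_⟩
      · rw [hF2' j hj ⟨_, hj2lt⟩ rfl, hF2' i hi ⟨_, hi2lt⟩ rfl, hsd2 _ _ (hblock2 _).1]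
        exact hw
      · rw [hF2' j hj ⟨_, hj2lt⟩ rfl, hF2' _ (by simp only [Fin.val_mk]; omega) ℓ (by simp only [Fin.val_mk]; omega), hsd2 _ _ (hblock2 ℓ).1]
        exact hdiff

/-- The independence complex of a chordal graph is shellable. -/
theorem stmt_3 {V : Type} [Fintype V] [DecidableEq V] (G : SimpleGraph V)
    (hG : IsChordal G) :
    ∃ (k : ℕ) (F : Fin k → Finset V),
      Function.Injective F ∧ (∀ S : Finset V, IsMaxIndepSet G S ↔ ∃ i, F i = S) ∧
      ∀ i j : Fin k, i < j →
        ∃ u ∈ F j \ F i, ∃ ℓ : Fin k, ℓ < j ∧ F j \ F ℓ = {u} := by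
  exact shellable_aux G.edgeSet.ncard G hG rfl
end

section
/- An ordering F_1, …, F_k of the facets of the independence complex of a graph G is a shelling if and only if the corresponding ordering of complements F_1^c, …, F_k^c (as squarefree monomials) is a linear quotients ordering for the cover ideal J(G). -/
open Finset

variable {V : Type} [Fintype V] [DecidableEq V]

section AuxLQ

open MvPolynomial

set_option linter.unusedSectionVars false

/-- exponent vector of the squarefree monomial of a vertex set -/
noncomputable def expOf (C : Finset V) : V →₀ ℕ := ∑ v ∈ C, Finsupp.single v 1

lemma expOf_apply (C : Finset V) (w : V) : expOf C w = if w ∈ C then 1 else 0 := by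
  classical
  rw [expOf, Finsupp.finset_sum_apply]
  simp [Finsupp.single_apply]

lemma expOf_insert {C : Finset V} {a : V} (h : a ∉ C) :
    expOf (insert a C) = Finsupp.single a 1 + expOf C := by
  rw [expOf, Finset.sum_insert h]; rfl

lemma expOf_le_iff {C : Finset V} {f : V →₀ ℕ} : expOf C ≤ f ↔ ∀ v ∈ C, 1 ≤ f v := by
  rw [Finsupp.le_def]
  constructor
  · intro h v hv; have := h v; rwa [expOf_apply, if_pos hv] at this
  · intro h v
    rw [expOf_apply]
    split_ifs with hv
    · exact h v hv
    · exact Nat.zero_le _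

lemma coverMonomial_eq (K : Type) [Field K] (C : Finset V) :
    coverMonomial K C = monomial (expOf C) (1 : K) := by
  classical
  rw [coverMonomial]
  induction C using Finset.induction with
  | empty => simp [expOf]
  | insert _ _ h ih =>
    rw [Finset.prod_insert h, ih, X, monomial_mul, one_mul, expOf_insert h]

lemma mem_span_mono (K : Type) [Field K] {ι : Type} (C : ι → Finset V) (S : Set ι)
    (p : MvPolynomial V K) :
    p ∈ Ideal.span ((fun j => coverMonomial K (C j)) '' S) ↔
      ∀ μ ∈ p.support, ∃ ℓ ∈ S, expOf (C ℓ) ≤ μ := by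
  have himg : (fun j => coverMonomial K (C j)) '' S
      = (fun s => monomial s (1 : K)) '' ((fun j => expOf (C j)) '' S) := by
    rw [Set.image_image]
    exact Set.image_congr fun j _ => coverMonomial_eq K (C j)
  rw [himg, mem_ideal_span_monomial_image]
  constructor
  · intro h μ hμ
    obtain ⟨si, ⟨ℓ, hℓ, rfl⟩, hle⟩ := h μ hμ
    exact ⟨ℓ, hℓ, hle⟩
  · intro h μ hμ
    obtain ⟨ℓ, hℓ, hle⟩ := h μ hμ
    exact ⟨expOf (C ℓ), ⟨ℓ, hℓ, rfl⟩, hle⟩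

lemma mem_colon_iff (K : Type) [Field K] {ι : Type} (C : ι → Finset V) (S : Set ι)
    (D : Finset V) (p : MvPolynomial V K) :
    p ∈ (Ideal.span ((fun j => coverMonomial K (C j)) '' S)).colon
        (Ideal.span {coverMonomial K D}) ↔
      ∀ μ ∈ p.support, ∃ ℓ ∈ S, expOf (C ℓ) ≤ μ + expOf D := by
  rw [Ideal.mem_colon_span_singleton, mem_span_mono]
  constructor
  · intro h μ hμ
    refine h (μ + expOf D) ?_
    rw [mem_support_iff, coverMonomial_eq, coeff_mul_monomial, mul_one]
    exact mem_support_iff.mp hμ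
  · intro h ν hν
    rw [mem_support_iff, coverMonomial_eq, coeff_mul_monomial'] at hν
    split_ifs at hν with hle
    · rw [mul_one] at hν
      obtain ⟨ℓ, hℓ, h2⟩ := h (ν - expOf D) (mem_support_iff.mpr hν)
      refine ⟨ℓ, hℓ, ?_⟩
      rwa [tsub_add_cancel_of_le hle] at h2
    · exact absurd rfl hν

end AuxLQ

/-- An ordering of the facets of the independence complex is a shelling iff the
corresponding ordering of complements is a linear quotients ordering for `J(G)`. -/
theorem stmt_5 (K : Type) [Field K] {V : Type} [Fintype V] [LinearOrder V]
    (G : SimpleGraph V) (k : ℕ) (F : Fin k → Finset V) (hinj : Function.Injective F)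
    (henum : ∀ S : Finset V, IsMaxIndepSet G S ↔ ∃ i, F i = S) :
    (∀ i j : Fin k, i < j →
        ∃ u ∈ F j \ F i, ∃ ℓ : Fin k, ℓ < j ∧ F j \ F ℓ = {u}) ↔
      IsLinQuotOrd (fun i : Fin k => coverMonomial K (F i)ᶜ) := by
  classical
  have hmax : ∀ i : Fin k, IsMaxIndepSet G (F i) := fun i => (henum (F i)).mpr ⟨i, rfl⟩
  have hne : ∀ i j : Fin k, i ≠ j → (F j \ F i).Nonempty := by
    intro i j hij
    rw [Finset.sdiff_nonempty]
    intro hsub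
    exact hij (hinj ((hmax j).2 (F i) (hmax i).1 hsub)).symm
  constructor
  · intro hS i
    refine ⟨{u | ∃ ℓ : Fin k, ℓ < i ∧ F i \ F ℓ = {u}}, le_antisymm ?_ ?_⟩
    · intro p hp
      refine MvPolynomial.mem_ideal_span_X_image.mpr ?_
      intro μ hμ
      obtain ⟨ℓ, hℓ, hle⟩ :=
        (mem_colon_iff K (fun j => (F j)ᶜ) {j | j < i} (F i)ᶜ p).mp hp μ hμ
      obtain ⟨u, hu, ℓ', hℓ', heq⟩ := hS ℓ i hℓ
      refine ⟨u, ⟨ℓ', hℓ', heq⟩, ?_⟩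
      have h1 := (Finsupp.le_def.mp hle) u
      rw [Finset.mem_sdiff] at hu
      rw [Finsupp.add_apply, expOf_apply, expOf_apply] at h1
      simp only [Finset.mem_compl, hu.1, hu.2, not_true, not_false_iff,
        if_true, if_false, not_not] at h1
      omega
    · rw [Ideal.span_le]
      rintro x ⟨u, hu, rfl⟩
      obtain ⟨ℓ, hℓ, heq⟩ := hu
      rw [SetLike.mem_coe]
      refine (mem_colon_iff K (fun j => (F j)ᶜ) {j | j < i} (F i)ᶜ _).mpr ?_
      intro μ hμ
      rw [MvPolynomial.support_X, Finset.mem_singleton] at hμ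
      subst hμ
      refine ⟨ℓ, hℓ, expOf_le_iff.mpr ?_⟩
      intro v hv
      rw [Finsupp.add_apply, Finsupp.single_apply, expOf_apply]
      by_cases huv : u = v
      · simp [huv]
      · rw [if_neg huv]
        rw [Finset.mem_compl] at hv
        have hvic : v ∈ (F i)ᶜ := by
          rw [Finset.mem_compl]
          intro hvFi
          have hmem : v ∈ F i \ F ℓ := Finset.mem_sdiff.mpr ⟨hvFi, hv⟩
          rw [heq, Finset.mem_singleton] at hmem
          exact huv hmem.symm
        rw [if_pos hvic]
  · intro hL i j hij
    obtain ⟨T, hT⟩ := hL j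
    set e := expOf ((F i)ᶜ \ (F j)ᶜ) with he
    have hx : (MvPolynomial.monomial e (1 : K)) ∈
        Ideal.span ((fun v => (MvPolynomial.X v : MvPolynomial V K)) '' T) := by
      rw [← hT]
      refine (mem_colon_iff K (fun j => (F j)ᶜ) {ℓ | ℓ < j} (F j)ᶜ _).mpr ?_
      intro μ hμ
      rw [MvPolynomial.support_monomial, if_neg one_ne_zero, Finset.mem_singleton] at hμ
      subst hμ
      refine ⟨i, hij, expOf_le_iff.mpr ?_⟩
      intro v hv
      rw [Finsupp.add_apply, he, expOf_apply, expOf_apply]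
      by_cases hvj : v ∈ (F j)ᶜ
      · rw [if_pos hvj]
        exact Nat.le_add_left 1 _
      · have hmem : v ∈ (F i)ᶜ \ (F j)ᶜ := Finset.mem_sdiff.mpr ⟨hv, hvj⟩
        rw [if_pos hmem]
        exact Nat.le_add_right 1 _
    rw [MvPolynomial.mem_ideal_span_X_image] at hx
    obtain ⟨u, huT, hu0⟩ := hx e
      (by rw [MvPolynomial.support_monomial, if_neg one_ne_zero]
          exact Finset.mem_singleton_self _)
    have hue : u ∈ (F i)ᶜ \ (F j)ᶜ := by
      by_contra h
      rw [he, expOf_apply, if_neg h] at hu0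
      exact hu0 rfl
    rw [Finset.mem_sdiff, Finset.mem_compl, Finset.mem_compl, not_not] at hue
    refine ⟨u, Finset.mem_sdiff.mpr ⟨hue.2, hue.1⟩, ?_⟩
    have hXu : (MvPolynomial.X u : MvPolynomial V K) ∈
        Ideal.span ((fun v => (MvPolynomial.X v : MvPolynomial V K)) '' T) :=
      Ideal.subset_span ⟨u, huT, rfl⟩
    rw [← hT] at hXu
    obtain ⟨ℓ, hℓ, hle⟩ :=
      (mem_colon_iff K (fun j => (F j)ᶜ) {ℓ | ℓ < j} (F j)ᶜ _).mp hXu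
        (Finsupp.single u 1)
        (by rw [MvPolynomial.support_X]; exact Finset.mem_singleton_self _)
    refine ⟨ℓ, hℓ, ?_⟩
    have hsub : F j \ F ℓ ⊆ {u} := by
      intro v hv
      rw [Finset.mem_sdiff] at hv
      have h1 := (Finsupp.le_def.mp hle) v
      rw [Finsupp.add_apply, Finsupp.single_apply, expOf_apply, expOf_apply] at h1
      simp only [Finset.mem_compl, hv.1, hv.2, not_true, not_false_iff,
        if_true, if_false, not_not] at h1
      rw [Finset.mem_singleton]
      by_contra hne'
      rw [if_neg (fun h => hne' h.symm)] at h1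
      omega
    rcases Finset.subset_singleton_iff.mp hsub with h | h
    · exact absurd h (hne ℓ j (ne_of_lt hℓ)).ne_empty
    · exact h
end
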